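/- arXiv:2510.09196 — 4 statements merged into one kernel-verified Lean document; each statement's English description precedes it below -/
import Mathlib

section
/- Let μ be the uniform probability measure on S^{d−1} ⊆ ℝ^d, let p ∈ (0,1/2], and let A ⊆ S^{d−1} be a measurable geodesically convex subset with x ∈ A. Then μ(A ∩ C_x^p) ≥ p · μ(A), where C_x^p = {w ∈ S^{d−1} : ⟨w, x⟩ ≥ t_{p,d}} is the spherical cap of measure p centered at x. -/
open MeasureTheory ProbabilityTheory Real
open scoped RealInnerProductSpace ENNReal NNReal

noncomputable section

/-- The standard Gaussian measure `N(0, I_d)` on `ℝ^d`. -/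
def stdGaussian (d : ℕ) : Measure (EuclideanSpace ℝ (Fin d)) :=
  (Measure.pi fun _ : Fin d => gaussianReal 0 1).map
    (MeasurableEquiv.toLp 2 (Fin d → ℝ))

/-- The uniform probability measure on the unit sphere `S^{d-1} ⊆ ℝ^d`,
viewed as a measure on the ambient space (normalized spherical surface measure). -/
def sphereUniform (d : ℕ) : Measure (EuclideanSpace ℝ (Fin d)) :=
  (((volume : Measure (EuclideanSpace ℝ (Fin d))).toSphere Set.univ)⁻¹) •
    ((volume : Measure (EuclideanSpace ℝ (Fin d))).toSphere).map (Subtype.val)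

/-- `t` is the threshold `t_{p,d}`: the probability that the inner product of two
independent uniform points on the sphere is at least `t` equals `p`. -/
def IsSphereThreshold (d : ℕ) (p t : ℝ) : Prop :=
  ((sphereUniform d).prod (sphereUniform d)) {xy | t ≤ ⟪xy.1, xy.2⟫} = ENNReal.ofReal p

/-- `τ` is the threshold `τ_{p,d}`: the probability that the inner product of two
independent standard Gaussian vectors is at least `τ` equals `p`. -/
def IsGaussThreshold (d : ℕ) (p τ : ℝ) : Prop :=
  ((stdGaussian d).prod (stdGaussian d)) {xy | τ ≤ ⟪xy.1, xy.2⟫} = ENNReal.ofReal p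

/-- The clique event: all pairwise inner products are at least the threshold `t`. -/
def cliqueSet (n d : ℕ) (t : ℝ) : Set (Fin n → EuclideanSpace ℝ (Fin d)) :=
  {X | ∀ i j : Fin n, i < j → t ≤ ⟪X i, X j⟫}

/-- The number of edges of the geometric graph: pairs `i < j` with `⟪X i, X j⟫ ≥ t`. -/
def edgeCount (n d : ℕ) (t : ℝ) (X : Fin n → EuclideanSpace ℝ (Fin d)) : ℕ :=
  Nat.card {ij : Fin n × Fin n // ij.1 < ij.2 ∧ t ≤ ⟪X ij.1, X ij.2⟫}

/-- A subset of the unit sphere is geodesically convex if for any two non-antipodal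
points of it, the minimizing geodesic segment joining them (i.e. the radial projection
of the Euclidean segment) is contained in it. -/
def GeodesicConvex (d : ℕ) (A : Set (EuclideanSpace ℝ (Fin d))) : Prop :=
  ∀ x ∈ A, ∀ y ∈ A, x ≠ -y → ∀ z ∈ segment ℝ x y, ‖z‖⁻¹ • z ∈ A



section Helpers
open Set Metric

private lemma norm_comb {E : Type*} [NormedAddCommGroup E] [InnerProductSpace ℝ E]
    {x v : E} (hx : ‖x‖ = 1) (hv : ‖v‖ = 1) (hxv : ⟪x, v⟫ = 0) (a r : ℝ) :
    ‖a • x + r • v‖ = Real.sqrt (a ^ 2 + r ^ 2) := by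
  have h2 : ‖a • x + r • v‖ ^ 2 = a ^ 2 + r ^ 2 := by
    rw [norm_add_sq_real, norm_smul, norm_smul, real_inner_smul_left, real_inner_smul_right, hxv]
    simp [hx, hv, mul_pow, sq_abs]
  rw [← h2, Real.sqrt_sq (norm_nonneg _)]

private lemma inner_comb {E : Type*} [NormedAddCommGroup E] [InnerProductSpace ℝ E]
    {x v : E} (hx : ‖x‖ = 1) (hxv : ⟪x, v⟫ = 0) (a r : ℝ) :
    ⟪a • x + r • v, x⟫ = a := by
  rw [inner_add_left, real_inner_smul_left, real_inner_smul_left,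
    real_inner_self_eq_norm_sq, hx]
  have hvx : ⟪v, x⟫ = (0:ℝ) := by rw [real_inner_comm]; exact hxv
  rw [hvx]
  ring

private lemma convex_step {n : ℕ} {A : Set (EuclideanSpace ℝ (Fin n))}
    (hconv : GeodesicConvex n A)
    {x u : EuclideanSpace ℝ (Fin n)} (hx : x ∈ A) (hxn : ‖x‖ = 1) (hun : ‖u‖ = 1)
    (hxu : ⟪x, u⟫ = 0) {α β α' β' : ℝ} (hβ : 0 < β) (hβ' : 0 < β')
    (h1 : α ^ 2 + β ^ 2 = 1) (h1' : α' ^ 2 + β' ^ 2 = 1) (hle : α ≤ α')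
    (hw : α • x + β • u ∈ A) : α' • x + β' • u ∈ A := by
  have hxx : ⟪x, x⟫ = 1 := by rw [real_inner_self_eq_norm_sq, hxn]; norm_num
  have huu : ⟪u, u⟫ = 1 := by rw [real_inner_self_eq_norm_sq, hun]; norm_num
  set w := α • x + β • u with hwdef
  set w' := α' • x + β' • u with hw'def
  have hw'n : ‖w'‖ = 1 := by
    rw [hw'def, norm_comb hxn hun hxu, h1', Real.sqrt_one]
  have hD : 0 ≤ β * α' - α * β' := by
    have hid : (β * α') ^ 2 - (α * β') ^ 2 = α' ^ 2 - α ^ 2 := by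
      linear_combination α' ^ 2 * h1 - α ^ 2 * h1'
    rcases le_or_gt 0 α with h0 | h0
    · have ha' : 0 ≤ α' := le_trans h0 hle
      nlinarith [hid, mul_nonneg hβ.le ha', mul_nonneg h0 hβ'.le,
        mul_nonneg (sub_nonneg.mpr hle) (by linarith : (0:ℝ) ≤ α + α')]
    · rcases le_or_gt 0 α' with h1 | h1
      · nlinarith [mul_nonneg hβ.le h1, mul_nonneg (by linarith : (0:ℝ) ≤ -α) hβ'.le]
      · nlinarith [hid, mul_pos hβ (by linarith : (0:ℝ) < -α'),
          mul_nonneg (by linarith : (0:ℝ) ≤ -α) hβ'.le,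
          mul_nonneg (sub_nonneg.mpr hle) (by linarith : (0:ℝ) ≤ -α + -α')]
  set D := β * α' - α * β' with hDdef
  have hden : 0 < D + β' := by linarith
  set s := β' / (D + β') with hsdef
  have hs0 : 0 ≤ s := div_nonneg hβ'.le hden.le
  have hs1 : s ≤ 1 := by
    rw [hsdef, div_le_one hden]; linarith
  set z := (1 - s) • x + s • w with hzdef
  have hzseg : z ∈ segment ℝ x w := ⟨1 - s, s, by linarith, hs0, by ring, rfl⟩
  have hzw' : z = (β / (D + β')) • w' := by
    have hc1 : (1 - s) + s * α = β * α' / (D + β') := by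
      rw [hsdef]; field_simp; ring
    have hc2 : s * β = β * β' / (D + β') := by
      rw [hsdef]; field_simp
    have hexp : z = ((1 - s) + s * α) • x + (s * β) • u := by
      rw [hzdef, hwdef]; module
    rw [hexp, hc1, hc2, hw'def]
    rw [smul_add, smul_smul, smul_smul]
    congr 1 <;> ring_nf
  have hcpos : 0 < β / (D + β') := div_pos hβ hden
  have hznorm : ‖z‖ = β / (D + β') := by
    rw [hzw', norm_smul, hw'n, mul_one, Real.norm_eq_abs, abs_of_pos hcpos]
  have hxnw : x ≠ -w := by
    intro h
    have h1 : ⟪x, u⟫ = ⟪-w, u⟫ := by rw [← h]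
    rw [inner_neg_left, hwdef, inner_add_left, real_inner_smul_left, real_inner_smul_left,
      hxu, huu] at h1
    simp at h1
    nlinarith
  have := hconv x hx w hw hxnw z hzseg
  rwa [hznorm, hzw', smul_smul, inv_mul_cancel₀ hcpos.ne', one_smul] at this


private lemma vol_singleton (m : ℕ) :
    (volume : Measure (EuclideanSpace ℝ (Fin (m + 1)))) {0} = 0 :=
  measure_singleton 0

private lemma restrict_compl_zero (m : ℕ) :
    (volume : Measure (EuclideanSpace ℝ (Fin (m + 1)))).restrict ({0}ᶜ) = volume := by
  rw [Measure.restrict_eq_self_of_ae_mem]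
  exact (ae_iff.2 (by simpa using vol_singleton m))

private lemma polar_mp (m : ℕ) :
    MeasurePreserving
      (fun ur : sphere (0 : EuclideanSpace ℝ (Fin (m + 1))) 1 × Ioi (0 : ℝ) =>
        (ur.2 : ℝ) • (ur.1 : EuclideanSpace ℝ (Fin (m + 1))))
      (((volume : Measure (EuclideanSpace ℝ (Fin (m + 1)))).toSphere).prod
        (Measure.volumeIoiPow m))
      (volume : Measure (EuclideanSpace ℝ (Fin (m + 1)))) := by
  have h1 := (volume : Measure (EuclideanSpace ℝ (Fin (m + 1)))).measurePreserving_homeomorphUnitSphereProd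
  have hfr : Module.finrank ℝ (EuclideanSpace ℝ (Fin (m + 1))) - 1 = m := by
    rw [finrank_euclideanSpace_fin]; omega
  rw [hfr] at h1
  have h2 : MeasurePreserving (homeomorphUnitSphereProd (EuclideanSpace ℝ (Fin (m + 1)))).toMeasurableEquiv.symm
      (((volume : Measure (EuclideanSpace ℝ (Fin (m + 1)))).toSphere).prod (Measure.volumeIoiPow m))
      ((volume : Measure (EuclideanSpace ℝ (Fin (m + 1)))).comap (↑)) := h1.symm (homeomorphUnitSphereProd (EuclideanSpace ℝ (Fin (m + 1)))).toMeasurableEquiv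
  have h3 : MeasurePreserving (fun y : ({0}ᶜ : Set (EuclideanSpace ℝ (Fin (m + 1)))) => (y : (EuclideanSpace ℝ (Fin (m + 1)))))
      ((volume : Measure (EuclideanSpace ℝ (Fin (m + 1)))).comap (↑)) (volume : Measure (EuclideanSpace ℝ (Fin (m + 1)))) := by
    refine ⟨measurable_subtype_coe, ?_⟩
    rw [MeasurableEmbedding.map_comap (MeasurableEmbedding.subtype_coe
      (measurableSet_singleton (0 : (EuclideanSpace ℝ (Fin (m + 1))))).compl), Subtype.range_coe,
      restrict_compl_zero m]
  have hfe : (fun ur : sphere (0 : (EuclideanSpace ℝ (Fin (m + 1)))) 1 × Ioi (0 : ℝ) => (ur.2 : ℝ) • (ur.1 : (EuclideanSpace ℝ (Fin (m + 1)))))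
      = (fun y : ({0}ᶜ : Set (EuclideanSpace ℝ (Fin (m + 1)))) => (y : (EuclideanSpace ℝ (Fin (m + 1))))) ∘
        ⇑(homeomorphUnitSphereProd (EuclideanSpace ℝ (Fin (m + 1)))).toMeasurableEquiv.symm := by
    funext ur
    simp
  rw [hfe]
  exact h3.comp h2

private lemma reorder_mp {X Y Z : Type*} [MeasurableSpace X] [MeasurableSpace Y]
    [MeasurableSpace Z] (μ : Measure X) (ν : Measure Y) (ξ : Measure Z)
    [SFinite μ] [SFinite ν] [SFinite ξ] :
    MeasurePreserving (fun w : X × (Y × Z) => (w.2.1, (w.1, w.2.2)))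
      (μ.prod (ν.prod ξ)) (ν.prod (μ.prod ξ)) := by
  have c1 := (measurePreserving_prodAssoc μ ν ξ).symm (MeasurableEquiv.prodAssoc)
  have c2 : MeasurePreserving (Prod.map (Prod.swap : X × Y → Y × X) (id : Z → Z))
      ((μ.prod ν).prod ξ) ((ν.prod μ).prod ξ) :=
    (Measure.measurePreserving_swap).prod (MeasurePreserving.id ξ)
  have c3 := measurePreserving_prodAssoc ν μ ξ
  have h := c3.comp (c2.comp c1)
  have hfe : (fun w : X × (Y × Z) => (w.2.1, (w.1, w.2.2)))
      = ⇑MeasurableEquiv.prodAssoc ∘ (Prod.map (Prod.swap : X × Y → Y × X) (id : Z → Z) ∘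
        ⇑(MeasurableEquiv.prodAssoc : (X × Y) × Z ≃ᵐ X × Y × Z).symm) := by
    funext w; rfl
  rw [hfe]
  exact h

private lemma split_mp (k : ℕ) (b : OrthonormalBasis (Fin (k + 2)) ℝ
    (EuclideanSpace ℝ (Fin (k + 2)))) :
    MeasurePreserving
      (fun ay : ℝ × EuclideanSpace ℝ (Fin (k + 1)) =>
        ay.1 • b 0 + ∑ i : Fin (k + 1), ay.2 i • b i.succ)
      ((volume : Measure ℝ).prod (volume : Measure (EuclideanSpace ℝ (Fin (k + 1)))))
      (volume : Measure (EuclideanSpace ℝ (Fin (k + 2)))) := by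
  have e1 : MeasurePreserving
      (Prod.map (id : ℝ → ℝ) ⇑(MeasurableEquiv.toLp 2 (Fin (k + 1) → ℝ)).symm)
      ((volume : Measure ℝ).prod (volume : Measure (EuclideanSpace ℝ (Fin (k + 1)))))
      ((volume : Measure ℝ).prod (Measure.pi fun _ : Fin (k + 1) => (volume : Measure ℝ))) := by
    refine (MeasurePreserving.id _).prod ?_
    have := EuclideanSpace.volume_preserving_symm_measurableEquiv_toLp (Fin (k + 1))
    rwa [volume_pi] at this
  have e2 := (measurePreserving_piFinSuccAbove (fun _ : Fin (k + 2) => (volume : Measure ℝ)) 0).symm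
  have e3 : MeasurePreserving (⇑(MeasurableEquiv.toLp 2 (Fin (k + 2) → ℝ)).symm.symm)
      (Measure.pi fun _ : Fin (k + 2) => (volume : Measure ℝ))
      (volume : Measure (EuclideanSpace ℝ (Fin (k + 2)))) := by
    have := (EuclideanSpace.volume_preserving_symm_measurableEquiv_toLp (Fin (k + 2))).symm
    rwa [volume_pi] at this
  have e4 := b.measurePreserving_repr_symm
  have hchain := e4.comp (e3.comp (e2.comp e1))
  convert hchain using 1
  funext ay
  obtain ⟨a, y⟩ := ay
  show a • b 0 + ∑ i : Fin (k + 1), y i • b i.succ = b.repr.symm _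
  rw [← OrthonormalBasis.sum_repr_symm]
  conv_rhs => rw [Fin.sum_univ_succAbove _ 0]
  simp [Fin.zero_succAbove, Fin.cons_zero, Fin.cons_succ,
    MeasurableEquiv.piFinSuccAbove_symm_apply, MeasurableEquiv.coe_toLp,
    MeasurableEquiv.coe_toLp_symm]



private def Jmap (k : ℕ) (b : OrthonormalBasis (Fin (k + 2)) ℝ (EuclideanSpace ℝ (Fin (k + 2))))
    (y : EuclideanSpace ℝ (Fin (k + 1))) : EuclideanSpace ℝ (Fin (k + 2)) :=
  ∑ i : Fin (k + 1), y i • b i.succ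

private lemma Jmap_smul (k : ℕ) (b : OrthonormalBasis (Fin (k + 2)) ℝ
    (EuclideanSpace ℝ (Fin (k + 2)))) (r : ℝ) (y : EuclideanSpace ℝ (Fin (k + 1))) :
    Jmap k b (r • y) = r • Jmap k b y := by
  unfold Jmap
  rw [Finset.smul_sum]
  refine Finset.sum_congr rfl fun i _ => ?_
  rw [smul_smul]
  congr 1

private lemma Jmap_inner (k : ℕ) (b : OrthonormalBasis (Fin (k + 2)) ℝ
    (EuclideanSpace ℝ (Fin (k + 2)))) (y z : EuclideanSpace ℝ (Fin (k + 1))) :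
    ⟪Jmap k b y, Jmap k b z⟫ = ⟪y, z⟫ := by
  have hbs : Orthonormal ℝ (fun i : Fin (k + 1) => b i.succ) :=
    b.orthonormal.comp _ (Fin.succ_injective _)
  unfold Jmap
  rw [hbs.inner_sum]
  simp [PiLp.inner_apply, mul_comm]

private lemma Jmap_norm (k : ℕ) (b : OrthonormalBasis (Fin (k + 2)) ℝ
    (EuclideanSpace ℝ (Fin (k + 2)))) (y : EuclideanSpace ℝ (Fin (k + 1))) (hy : ‖y‖ = 1) :
    ‖Jmap k b y‖ = 1 := by
  have h := Jmap_inner k b y y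
  rw [real_inner_self_eq_norm_sq, real_inner_self_eq_norm_sq, hy] at h
  nlinarith [norm_nonneg (Jmap k b y)]

private lemma Jmap_inner_left (k : ℕ) (b : OrthonormalBasis (Fin (k + 2)) ℝ
    (EuclideanSpace ℝ (Fin (k + 2)))) (y : EuclideanSpace ℝ (Fin (k + 1))) :
    ⟪b 0, Jmap k b y⟫ = 0 := by
  unfold Jmap
  rw [inner_sum]
  refine Finset.sum_eq_zero fun i _ => ?_
  rw [real_inner_smul_right, b.orthonormal.2 (Fin.succ_ne_zero i).symm, mul_zero]

private lemma Jmap_cont (k : ℕ) (b : OrthonormalBasis (Fin (k + 2)) ℝ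
    (EuclideanSpace ℝ (Fin (k + 2)))) : Continuous (Jmap k b) := by
  unfold Jmap
  exact continuous_finset_sum _ fun i _ =>
    ((EuclideanSpace.proj i).continuous.smul continuous_const)

private def Theta (k : ℕ) (b : OrthonormalBasis (Fin (k + 2)) ℝ (EuclideanSpace ℝ (Fin (k + 2))))
    (x : EuclideanSpace ℝ (Fin (k + 2)))
    (w : sphere (0 : EuclideanSpace ℝ (Fin (k + 1))) 1 × (ℝ × Ioi (0 : ℝ))) :
    EuclideanSpace ℝ (Fin (k + 2)) :=
  w.2.1 • x + (w.2.2 : ℝ) • Jmap k b (w.1 : EuclideanSpace ℝ (Fin (k + 1)))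

private lemma theta_mp (k : ℕ) (b : OrthonormalBasis (Fin (k + 2)) ℝ
    (EuclideanSpace ℝ (Fin (k + 2)))) :
    MeasurePreserving (Theta k b (b 0))
      (((volume : Measure (EuclideanSpace ℝ (Fin (k + 1)))).toSphere).prod
        ((volume : Measure ℝ).prod (Measure.volumeIoiPow k)))
      (volume : Measure (EuclideanSpace ℝ (Fin (k + 2)))) := by
  have hre := reorder_mp ((volume : Measure (EuclideanSpace ℝ (Fin (k + 1)))).toSphere)
    (volume : Measure ℝ) (Measure.volumeIoiPow k)
  have hsm : MeasurePreserving
      (Prod.map (id : ℝ → ℝ)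
        (fun ur : sphere (0 : EuclideanSpace ℝ (Fin (k + 1))) 1 × Ioi (0 : ℝ) =>
          (ur.2 : ℝ) • (ur.1 : EuclideanSpace ℝ (Fin (k + 1)))))
      ((volume : Measure ℝ).prod
        (((volume : Measure (EuclideanSpace ℝ (Fin (k + 1)))).toSphere).prod
          (Measure.volumeIoiPow k)))
      ((volume : Measure ℝ).prod (volume : Measure (EuclideanSpace ℝ (Fin (k + 1))))) :=
    (MeasurePreserving.id _).prod (polar_mp k)
  have hchain := (split_mp k b).comp (hsm.comp hre)
  have hfe : Theta k b (b 0) = (fun ay : ℝ × EuclideanSpace ℝ (Fin (k + 1)) =>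
      ay.1 • b 0 + ∑ i : Fin (k + 1), ay.2 i • b i.succ) ∘
      (Prod.map (id : ℝ → ℝ)
        (fun ur : sphere (0 : EuclideanSpace ℝ (Fin (k + 1))) 1 × Ioi (0 : ℝ) =>
          (ur.2 : ℝ) • (ur.1 : EuclideanSpace ℝ (Fin (k + 1)))) ∘
        (fun w : sphere (0 : EuclideanSpace ℝ (Fin (k + 1))) 1 × (ℝ × Ioi (0 : ℝ)) =>
          (w.2.1, (w.1, w.2.2)))) := by
    funext w
    show Theta k b (b 0) w = w.2.1 • b 0 +
      ∑ i : Fin (k + 1), ((w.2.2 : ℝ) • (w.1 : EuclideanSpace ℝ (Fin (k + 1)))) i • b i.succ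
    rw [Theta, show (∑ i : Fin (k + 1), ((w.2.2 : ℝ) • (w.1 : EuclideanSpace ℝ (Fin (k + 1)))) i • b i.succ)
      = Jmap k b ((w.2.2 : ℝ) • (w.1 : EuclideanSpace ℝ (Fin (k + 1)))) from rfl, Jmap_smul]
  rw [hfe]
  exact hchain



private lemma sphereUniform_cone (m : ℕ) (S : Set (EuclideanSpace ℝ (Fin (m + 1))))
    (hS : MeasurableSet S) :
    sphereUniform (m + 1) S * Measure.volumeIoiPow m (Iio (⟨1, Set.mem_Ioi.2 one_pos⟩ : Ioi (0:ℝ)))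
      = ((volume : Measure (EuclideanSpace ℝ (Fin (m + 1)))).toSphere Set.univ)⁻¹ *
        volume {z : EuclideanSpace ℝ (Fin (m + 1)) | z ≠ 0 ∧ ‖z‖ < 1 ∧ ‖z‖⁻¹ • z ∈ S} := by
  have hmap : sphereUniform (m + 1) S
      = ((volume : Measure (EuclideanSpace ℝ (Fin (m + 1)))).toSphere Set.univ)⁻¹ *
        (volume : Measure (EuclideanSpace ℝ (Fin (m + 1)))).toSphere (Subtype.val ⁻¹' S) := by
    rw [sphereUniform, Measure.smul_apply, Measure.map_apply measurable_subtype_coe hS,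
      smul_eq_mul]
  have h1 := (volume : Measure (EuclideanSpace ℝ (Fin (m + 1)))).measurePreserving_homeomorphUnitSphereProd
  have hfr : Module.finrank ℝ (EuclideanSpace ℝ (Fin (m + 1))) - 1 = m := by
    rw [finrank_euclideanSpace_fin]; omega
  rw [hfr] at h1
  have hmeasS : MeasurableSet
      (((Subtype.val : sphere (0 : EuclideanSpace ℝ (Fin (m + 1))) 1 →
          EuclideanSpace ℝ (Fin (m + 1))) ⁻¹' S) ×ˢ
        (Iio (⟨1, Set.mem_Ioi.2 one_pos⟩ : Ioi (0:ℝ)))) :=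
    (measurable_subtype_coe hS).prod measurableSet_Iio
  have h2 : ((volume : Measure (EuclideanSpace ℝ (Fin (m + 1)))).toSphere).prod
        (Measure.volumeIoiPow m)
        (((Subtype.val : sphere (0 : EuclideanSpace ℝ (Fin (m + 1))) 1 →
          EuclideanSpace ℝ (Fin (m + 1))) ⁻¹' S) ×ˢ Iio ⟨1, Set.mem_Ioi.2 one_pos⟩)
      = (volume : Measure (EuclideanSpace ℝ (Fin (m + 1)))).toSphere (Subtype.val ⁻¹' S) *
        Measure.volumeIoiPow m (Iio ⟨1, Set.mem_Ioi.2 one_pos⟩) := Measure.prod_prod _ _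
  have h3 := h1.measure_preimage hmeasS.nullMeasurableSet
  rw [comap_subtype_coe_apply (measurableSet_singleton (0 : EuclideanSpace ℝ (Fin (m + 1)))).compl] at h3
  have hset : Subtype.val '' ((homeomorphUnitSphereProd (EuclideanSpace ℝ (Fin (m + 1)))) ⁻¹'
        (((Subtype.val : sphere (0 : EuclideanSpace ℝ (Fin (m + 1))) 1 →
          EuclideanSpace ℝ (Fin (m + 1))) ⁻¹' S) ×ˢ Iio ⟨1, Set.mem_Ioi.2 one_pos⟩))
      = {z : EuclideanSpace ℝ (Fin (m + 1)) | z ≠ 0 ∧ ‖z‖ < 1 ∧ ‖z‖⁻¹ • z ∈ S} := by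
    have hmem : ∀ z : ({0}ᶜ : Set (EuclideanSpace ℝ (Fin (m + 1)))),
        (homeomorphUnitSphereProd (EuclideanSpace ℝ (Fin (m + 1))) z ∈
          (((Subtype.val : sphere (0 : EuclideanSpace ℝ (Fin (m + 1))) 1 →
            EuclideanSpace ℝ (Fin (m + 1))) ⁻¹' S) ×ˢ Iio (⟨1, Set.mem_Ioi.2 one_pos⟩ : Ioi (0:ℝ))))
        ↔ (‖(z : EuclideanSpace ℝ (Fin (m + 1)))‖ < 1 ∧
            ‖(z : EuclideanSpace ℝ (Fin (m + 1)))‖⁻¹ • (z : EuclideanSpace ℝ (Fin (m + 1))) ∈ S) := by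
      intro z
      simp only [Set.mem_prod, Set.mem_preimage, Set.mem_Iio, ← Subtype.coe_lt_coe,
        homeomorphUnitSphereProd_apply_fst_coe, homeomorphUnitSphereProd_apply_snd_coe]
      tauto
    ext z
    constructor
    · rintro ⟨⟨z, hz⟩, hm, rfl⟩
      have := (hmem ⟨z, hz⟩).1 hm
      exact ⟨hz, this.1, this.2⟩
    · rintro ⟨hz, h1', h2'⟩
      exact ⟨⟨z, hz⟩, (hmem ⟨z, hz⟩).2 ⟨h1', h2'⟩, rfl⟩
  rw [hset] at h3
  rw [hmap, mul_assoc, ← h2, ← h3]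


private def nmq (q : ℝ × Ioi (0 : ℝ)) : ℝ := Real.sqrt (q.1 ^ 2 + (q.2 : ℝ) ^ 2)

private lemma nmq_pos (q : ℝ × Ioi (0 : ℝ)) : 0 < nmq q := by
  have hr : (0 : ℝ) < q.2 := q.2.2
  exact Real.sqrt_pos.2 (by nlinarith [sq_nonneg q.1])

private lemma nmq_sq (q : ℝ × Ioi (0 : ℝ)) : nmq q ^ 2 = q.1 ^ 2 + (q.2 : ℝ) ^ 2 := by
  have hr : (0 : ℝ) < q.2 := q.2.2
  exact Real.sq_sqrt (by nlinarith [sq_nonneg q.1])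

private def Cslice (t : ℝ) : Set (ℝ × Ioi (0 : ℝ)) :=
  {q | q.1 ^ 2 + (q.2 : ℝ) ^ 2 < 1 ∧ t ≤ q.1 / nmq q}

private def Bslice : Set (ℝ × Ioi (0 : ℝ)) := {q | q.1 ^ 2 + (q.2 : ℝ) ^ 2 < 1}

private lemma Bslice_meas : MeasurableSet Bslice := by
  have hc : Continuous fun q : ℝ × Ioi (0 : ℝ) => q.1 ^ 2 + (q.2 : ℝ) ^ 2 :=
    (continuous_fst.pow 2).add ((continuous_subtype_val.comp continuous_snd).pow 2)
  exact hc.measurable measurableSet_Iio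

private lemma Cslice_meas (t : ℝ) : MeasurableSet (Cslice t) := by
  have hc : Continuous fun q : ℝ × Ioi (0 : ℝ) => q.1 ^ 2 + (q.2 : ℝ) ^ 2 :=
    (continuous_fst.pow 2).add ((continuous_subtype_val.comp continuous_snd).pow 2)
  have hc2 : Continuous fun q : ℝ × Ioi (0 : ℝ) => q.1 / nmq q := by
    refine continuous_fst.div ?_ fun q => (nmq_pos q).ne'
    exact (hc.sqrt)
  exact (hc.measurable measurableSet_Iio).inter (hc2.measurable measurableSet_Ici)

private lemma theta_norm (k : ℕ) (b : OrthonormalBasis (Fin (k + 2)) ℝ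
    (EuclideanSpace ℝ (Fin (k + 2)))) (x : EuclideanSpace ℝ (Fin (k + 2)))
    (hx1 : ‖x‖ = 1) (hb0 : b 0 = x)
    (w : sphere (0 : EuclideanSpace ℝ (Fin (k + 1))) 1 × (ℝ × Ioi (0 : ℝ))) :
    ‖Theta k b x w‖ = nmq w.2 := by
  have hun : ‖(w.1 : EuclideanSpace ℝ (Fin (k + 1)))‖ = 1 :=
    mem_sphere_zero_iff_norm.mp w.1.2
  have hxJ : ⟪x, Jmap k b (w.1 : EuclideanSpace ℝ (Fin (k + 1)))⟫ = 0 := by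
    rw [← hb0]; exact Jmap_inner_left k b _
  rw [Theta, norm_comb hx1 (Jmap_norm k b _ hun) hxJ, nmq]

private lemma theta_ne (k : ℕ) (b : OrthonormalBasis (Fin (k + 2)) ℝ
    (EuclideanSpace ℝ (Fin (k + 2)))) (x : EuclideanSpace ℝ (Fin (k + 2)))
    (hx1 : ‖x‖ = 1) (hb0 : b 0 = x)
    (w : sphere (0 : EuclideanSpace ℝ (Fin (k + 1))) 1 × (ℝ × Ioi (0 : ℝ))) :
    Theta k b x w ≠ 0 := by
  intro h
  have := theta_norm k b x hx1 hb0 w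
  rw [h, norm_zero] at this
  exact absurd this.symm (nmq_pos w.2).ne'

private lemma theta_normalize (k : ℕ) (b : OrthonormalBasis (Fin (k + 2)) ℝ
    (EuclideanSpace ℝ (Fin (k + 2)))) (x : EuclideanSpace ℝ (Fin (k + 2)))
    (hx1 : ‖x‖ = 1) (hb0 : b 0 = x)
    (w : sphere (0 : EuclideanSpace ℝ (Fin (k + 1))) 1 × (ℝ × Ioi (0 : ℝ))) :
    ‖Theta k b x w‖⁻¹ • Theta k b x w
      = (w.2.1 / nmq w.2) • x + ((w.2.2 : ℝ) / nmq w.2) •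
          Jmap k b (w.1 : EuclideanSpace ℝ (Fin (k + 1))) := by
  rw [theta_norm k b x hx1 hb0 w, Theta, smul_add, smul_smul, smul_smul,
    inv_mul_eq_div, inv_mul_eq_div]

private lemma theta_inner (k : ℕ) (b : OrthonormalBasis (Fin (k + 2)) ℝ
    (EuclideanSpace ℝ (Fin (k + 2)))) (x : EuclideanSpace ℝ (Fin (k + 2)))
    (hx1 : ‖x‖ = 1) (hb0 : b 0 = x)
    (w : sphere (0 : EuclideanSpace ℝ (Fin (k + 1))) 1 × (ℝ × Ioi (0 : ℝ))) :
    ⟪‖Theta k b x w‖⁻¹ • Theta k b x w, x⟫ = w.2.1 / nmq w.2 := by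
  rw [theta_normalize k b x hx1 hb0 w]
  have hxJ : ⟪x, Jmap k b (w.1 : EuclideanSpace ℝ (Fin (k + 1)))⟫ = 0 := by
    rw [← hb0]; exact Jmap_inner_left k b _
  exact inner_comb hx1 hxJ _ _



private theorem cap_aux (k : ℕ) (p : ℝ) (hp : 0 < p) (hp' : p ≤ 1 / 2) (t : ℝ)
    (ht : ∀ x ∈ Metric.sphere (0 : EuclideanSpace ℝ (Fin (k + 2))) 1,
      sphereUniform (k + 2) {w | t ≤ ⟪w, x⟫} = ENNReal.ofReal p)
    (A : Set (EuclideanSpace ℝ (Fin (k + 2)))) (hAmeas : MeasurableSet A)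
    (hAsub : A ⊆ Metric.sphere (0 : EuclideanSpace ℝ (Fin (k + 2))) 1)
    (hconv : GeodesicConvex (k + 2) A)
    (x : EuclideanSpace ℝ (Fin (k + 2))) (hx : x ∈ A) :
    ENNReal.ofReal p * sphereUniform (k + 2) A
      ≤ sphereUniform (k + 2) (A ∩ {w | t ≤ ⟪w, x⟫}) := by
  have hx1 : ‖x‖ = 1 := by
    have := hAsub hx
    rwa [mem_sphere_zero_iff_norm] at this
  -- orthonormal basis with b 0 = x
  obtain ⟨b, hb0⟩ : ∃ b : OrthonormalBasis (Fin (k + 2)) ℝ (EuclideanSpace ℝ (Fin (k + 2))),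
      b 0 = x := by
    have hcard : Module.finrank ℝ (EuclideanSpace ℝ (Fin (k + 2))) = Fintype.card (Fin (k + 2)) := by
      simp
    haveI : Subsingleton (({0} : Set (Fin (k + 2)))) :=
      ⟨fun a c => Subtype.ext (by
        have ha := a.2; have hc := c.2
        simp only [Set.mem_singleton_iff] at ha hc
        rw [ha, hc])⟩
    have horth : Orthonormal ℝ (({0} : Set (Fin (k + 2))).restrict (fun _ => x)) :=
      ⟨fun _ => hx1, fun i j hij => absurd (Subsingleton.elim i j) hij⟩
    obtain ⟨b, hb⟩ := horth.exists_orthonormalBasis_extension_of_card_eq hcard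
    exact ⟨b, hb 0 rfl⟩
  have hΘ : MeasurePreserving (Theta k b x)
      (((volume : Measure (EuclideanSpace ℝ (Fin (k + 1)))).toSphere).prod
        ((volume : Measure ℝ).prod (Measure.volumeIoiPow k)))
      (volume : Measure (EuclideanSpace ℝ (Fin (k + 2)))) := by
    rw [← hb0]; exact theta_mp k b
  -- basic measurability
  have hinner_cont : Continuous fun w : EuclideanSpace ℝ (Fin (k + 2)) => ⟪w, x⟫ :=
    continuous_id.inner continuous_const
  have hCsmeas : MeasurableSet {w : EuclideanSpace ℝ (Fin (k + 2)) | t ≤ ⟪w, x⟫} :=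
    hinner_cont.measurable measurableSet_Ici
  have hnormal_meas : Measurable (fun z : EuclideanSpace ℝ (Fin (k + 2)) => ‖z‖⁻¹ • z) :=
    (measurable_norm.inv).smul measurable_id
  have hconemeas : ∀ S : Set (EuclideanSpace ℝ (Fin (k + 2))), MeasurableSet S →
      MeasurableSet {z : EuclideanSpace ℝ (Fin (k + 2)) | z ≠ 0 ∧ ‖z‖ < 1 ∧ ‖z‖⁻¹ • z ∈ S} := by
    intro S hS
    have hrw : {z : EuclideanSpace ℝ (Fin (k + 2)) | z ≠ 0 ∧ ‖z‖ < 1 ∧ ‖z‖⁻¹ • z ∈ S}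
        = ({0}ᶜ : Set (EuclideanSpace ℝ (Fin (k + 2)))) ∩
          ((fun z : EuclideanSpace ℝ (Fin (k + 2)) => ‖z‖) ⁻¹' Iio 1 ∩
            (fun z : EuclideanSpace ℝ (Fin (k + 2)) => ‖z‖⁻¹ • z) ⁻¹' S) := rfl
    rw [hrw]
    exact ((measurableSet_singleton 0).compl).inter
      ((measurable_norm measurableSet_Iio).inter (hnormal_meas hS))
  -- preimage descriptions
  have hball : ∀ (w : sphere (0 : EuclideanSpace ℝ (Fin (k + 1))) 1 × (ℝ × Ioi (0 : ℝ))),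
      ‖Theta k b x w‖ < 1 ↔ w.2.1 ^ 2 + (w.2.2 : ℝ) ^ 2 < 1 := by
    intro w
    rw [theta_norm k b x hx1 hb0 w, nmq, Real.sqrt_lt' one_pos, one_pow]
  have hTC : (Theta k b x) ⁻¹'
        {z : EuclideanSpace ℝ (Fin (k + 2)) | z ≠ 0 ∧ ‖z‖ < 1 ∧
          ‖z‖⁻¹ • z ∈ {w : EuclideanSpace ℝ (Fin (k + 2)) | t ≤ ⟪w, x⟫}}
      = Set.univ ×ˢ Cslice t := by
    ext w
    simp only [Set.mem_preimage, Set.mem_setOf_eq, Set.mem_prod, Set.mem_univ, true_and]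
    constructor
    · rintro ⟨-, hb1, hb2⟩
      refine ⟨(hball w).1 hb1, ?_⟩
      rwa [theta_inner k b x hx1 hb0 w] at hb2
    · rintro ⟨h1, h2⟩
      exact ⟨theta_ne k b x hx1 hb0 w, (hball w).2 h1,
        by rwa [theta_inner k b x hx1 hb0 w]⟩
  have hTuniv : (Theta k b x) ⁻¹'
        {z : EuclideanSpace ℝ (Fin (k + 2)) | z ≠ 0 ∧ ‖z‖ < 1 ∧
          ‖z‖⁻¹ • z ∈ (Set.univ : Set (EuclideanSpace ℝ (Fin (k + 2))))}
      = Set.univ ×ˢ Bslice := by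
    ext w
    simp only [Set.mem_preimage, Set.mem_setOf_eq, Set.mem_prod, Set.mem_univ, true_and,
      and_true, Set.mem_univ]
    constructor
    · rintro ⟨-, hb1⟩
      exact (hball w).1 hb1
    · intro h1
      exact ⟨theta_ne k b x hx1 hb0 w, (hball w).2 h1⟩
  -- constants
  set R : ℝ≥0∞ :=
    Measure.volumeIoiPow (k + 1) (Iio (⟨1, Set.mem_Ioi.2 one_pos⟩ : Ioi (0:ℝ))) with hRdef
  have hRval := Measure.volumeIoiPow_apply_Iio (k + 1) (⟨1, Set.mem_Ioi.2 one_pos⟩ : Ioi (0:ℝ))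
  rw [← hRdef] at hRval
  have hR0 : R ≠ 0 := by
    rw [hRval]
    refine (ENNReal.ofReal_pos.2 ?_).ne'
    positivity
  have hRtop : R ≠ ⊤ := by rw [hRval]; exact ENNReal.ofReal_ne_top
  set c' : ℝ≥0∞ :=
    (((volume : Measure (EuclideanSpace ℝ (Fin (k + 2)))).toSphere) Set.univ)⁻¹ with hc'def
  set κ : Measure (ℝ × Ioi (0:ℝ)) :=
    (volume : Measure ℝ).prod (Measure.volumeIoiPow k) with hκdef
  set σ' : Measure (sphere (0 : EuclideanSpace ℝ (Fin (k + 1))) 1) :=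
    (volume : Measure (EuclideanSpace ℝ (Fin (k + 1)))).toSphere with hσ'def
  have hkey : ∀ S : Set (EuclideanSpace ℝ (Fin (k + 2))), MeasurableSet S →
      sphereUniform (k + 2) S * R
        = c' * (σ'.prod κ)
            ((Theta k b x) ⁻¹' {z : EuclideanSpace ℝ (Fin (k + 2)) |
              z ≠ 0 ∧ ‖z‖ < 1 ∧ ‖z‖⁻¹ • z ∈ S}) := by
    intro S hS
    rw [hΘ.measure_preimage ((hconemeas S hS)).nullMeasurableSet]
    exact sphereUniform_cone (k + 1) S hS
  have hCap : sphereUniform (k + 2) {w : EuclideanSpace ℝ (Fin (k + 2)) | t ≤ ⟪w, x⟫}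
      = ENNReal.ofReal p := ht x (hAsub hx)
  have hMC := hkey _ hCsmeas
  rw [hCap, hTC, Measure.prod_prod] at hMC
  have hinvmul : ∀ a : ℝ≥0∞, a⁻¹ * a ≤ 1 := by
    intro a
    rcases eq_or_ne a 0 with rfl | h0
    · simp
    rcases eq_or_ne a ⊤ with rfl | htop
    · simp
    · rw [ENNReal.inv_mul_cancel h0 htop]
  have hMune : sphereUniform (k + 2) (Set.univ) ≤ 1 := by
    rw [sphereUniform, Measure.smul_apply,
      Measure.map_apply measurable_subtype_coe MeasurableSet.univ, Set.preimage_univ,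
      smul_eq_mul]
    exact hinvmul _
  have hMB := hkey _ MeasurableSet.univ
  rw [hTuniv, Measure.prod_prod] at hMB
  have hMBle : c' * (σ' Set.univ * κ Bslice) ≤ R := by
    rw [← hMB]
    calc sphereUniform (k + 2) Set.univ * R ≤ 1 * R := mul_le_mul_left hMune R
      _ = R := one_mul R
  set lam := c' * σ' Set.univ with hlam
  have hMC' : ENNReal.ofReal p * R = lam * κ (Cslice t) := by
    rw [hlam, mul_assoc]; exact hMC
  have hMB' : lam * κ Bslice ≤ R := by
    rw [hlam, mul_assoc]; exact hMBle
  have hpR : ENNReal.ofReal p * R ≠ 0 := mul_ne_zero (ENNReal.ofReal_pos.2 hp).ne' hR0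
  have hpRtop : ENNReal.ofReal p * R ≠ ⊤ := ENNReal.mul_ne_top ENNReal.ofReal_ne_top hRtop
  have hlam0 : lam ≠ 0 := by
    intro h; rw [h, zero_mul] at hMC'; exact hpR hMC'
  have hlamtop : lam ≠ ⊤ := by
    intro h
    rcases eq_or_ne (κ (Cslice t)) 0 with h0 | h0
    · rw [h0, mul_zero] at hMC'; exact hpR hMC'
    · rw [h, ENNReal.top_mul h0] at hMC'; exact hpRtop hMC'
  have hκC : lam⁻¹ * (ENNReal.ofReal p * R) = κ (Cslice t) := by
    rw [hMC', ← mul_assoc, ENNReal.inv_mul_cancel hlam0 hlamtop, one_mul]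
  have hκB : κ Bslice ≤ lam⁻¹ * R := by
    have h2 := mul_le_mul_right hMB' lam⁻¹
    rwa [← mul_assoc, ENNReal.inv_mul_cancel hlam0 hlamtop, one_mul] at h2
  have hPC : ENNReal.ofReal p * κ Bslice ≤ κ (Cslice t) := by
    calc ENNReal.ofReal p * κ Bslice ≤ ENNReal.ofReal p * (lam⁻¹ * R) :=
        mul_le_mul_right hκB _
      _ = lam⁻¹ * (ENNReal.ofReal p * R) := by ring
      _ = κ (Cslice t) := hκC
  -- fiberwise inequality
  have hfiber : ∀ u : sphere (0 : EuclideanSpace ℝ (Fin (k + 1))) 1,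
      ENNReal.ofReal p * κ (Prod.mk u ⁻¹' ((Theta k b x) ⁻¹'
          {z : EuclideanSpace ℝ (Fin (k + 2)) | z ≠ 0 ∧ ‖z‖ < 1 ∧ ‖z‖⁻¹ • z ∈ A}))
        ≤ κ ((Prod.mk u ⁻¹' ((Theta k b x) ⁻¹'
            {z : EuclideanSpace ℝ (Fin (k + 2)) | z ≠ 0 ∧ ‖z‖ < 1 ∧ ‖z‖⁻¹ • z ∈ A}))
          ∩ Cslice t) := by
    intro u
    set Su := Prod.mk u ⁻¹' ((Theta k b x) ⁻¹'
      {z : EuclideanSpace ℝ (Fin (k + 2)) | z ≠ 0 ∧ ‖z‖ < 1 ∧ ‖z‖⁻¹ • z ∈ A}) with hSudef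
    have hmemSu : ∀ q : ℝ × Ioi (0:ℝ), q ∈ Su ↔
        (q.1 ^ 2 + (q.2:ℝ) ^ 2 < 1 ∧
          (q.1 / nmq q) • x + ((q.2:ℝ) / nmq q) •
            Jmap k b (u : EuclideanSpace ℝ (Fin (k + 1))) ∈ A) := by
      intro q
      rw [hSudef]
      simp only [Set.mem_preimage, Set.mem_setOf_eq]
      constructor
      · rintro ⟨-, h1, h2⟩
        refine ⟨(hball (u, q)).1 h1, ?_⟩
        rwa [theta_normalize k b x hx1 hb0 (u, q)] at h2
      · rintro ⟨h1, h2⟩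
        exact ⟨theta_ne k b x hx1 hb0 (u, q), (hball (u, q)).2 h1,
          by rwa [theta_normalize k b x hx1 hb0 (u, q)]⟩
    have hSuB : Su ⊆ Bslice := fun q hq => ((hmemSu q).1 hq).1
    by_cases hcase : ∀ q ∈ Su, t ≤ q.1 / nmq q
    · have hsub : Su ⊆ Cslice t := fun q hq => ⟨((hmemSu q).1 hq).1, hcase q hq⟩
      rw [Set.inter_eq_left.mpr hsub]
      calc ENNReal.ofReal p * κ Su ≤ 1 * κ Su :=
          mul_le_mul_left (ENNReal.ofReal_le_one.2 (by linarith)) _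
        _ = κ Su := one_mul _
    · push_neg at hcase
      obtain ⟨q₀, hq₀S, hq₀t⟩ := hcase
      have hq₀ := (hmemSu q₀).1 hq₀S
      have hun : ‖(u : EuclideanSpace ℝ (Fin (k + 1)))‖ = 1 := mem_sphere_zero_iff_norm.mp u.2
      have hxJ : ⟪x, Jmap k b (u : EuclideanSpace ℝ (Fin (k + 1)))⟫ = 0 := by
        rw [← hb0]; exact Jmap_inner_left k b _
      have hCsub : Cslice t ⊆ Su := by
        rintro q' ⟨hb', ht'⟩
        refine (hmemSu q').2 ⟨hb', ?_⟩
        have hr0 : (0:ℝ) < q₀.2 := q₀.2.2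
        have hr' : (0:ℝ) < q'.2 := q'.2.2
        have hn0 := nmq_pos q₀
        have hn' := nmq_pos q'
        refine convex_step hconv hx hx1 (Jmap_norm k b _ hun) hxJ
          (div_pos hr0 hn0) (div_pos hr' hn') ?_ ?_ ?_ hq₀.2
        · have hsq := nmq_sq q₀
          field_simp
          linarith
        · have hsq := nmq_sq q'
          field_simp
          linarith
        · exact le_of_lt (lt_of_lt_of_le hq₀t ht')
      rw [Set.inter_eq_right.mpr hCsub]
      calc ENNReal.ofReal p * κ Su ≤ ENNReal.ofReal p * κ Bslice :=
          mul_le_mul_right (measure_mono hSuB) _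
        _ ≤ κ (Cslice t) := hPC
  -- conclusion
  have hconeInter : {z : EuclideanSpace ℝ (Fin (k + 2)) | z ≠ 0 ∧ ‖z‖ < 1 ∧
        ‖z‖⁻¹ • z ∈ A ∩ {w : EuclideanSpace ℝ (Fin (k + 2)) | t ≤ ⟪w, x⟫}}
      = {z : EuclideanSpace ℝ (Fin (k + 2)) | z ≠ 0 ∧ ‖z‖ < 1 ∧ ‖z‖⁻¹ • z ∈ A}
        ∩ {z : EuclideanSpace ℝ (Fin (k + 2)) | z ≠ 0 ∧ ‖z‖ < 1 ∧
            ‖z‖⁻¹ • z ∈ {w : EuclideanSpace ℝ (Fin (k + 2)) | t ≤ ⟪w, x⟫}} := by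
    ext z
    simp only [Set.mem_setOf_eq, Set.mem_inter_iff]
    tauto
  rw [← ENNReal.mul_le_mul_iff_left hR0 hRtop, mul_assoc, hkey A hAmeas,
    hkey _ (hAmeas.inter hCsmeas), hconeInter, Set.preimage_inter, hTC, mul_left_comm]
  refine mul_le_mul_right ?_ c'
  have hTAmeas : MeasurableSet ((Theta k b x) ⁻¹'
      {z : EuclideanSpace ℝ (Fin (k + 2)) | z ≠ 0 ∧ ‖z‖ < 1 ∧ ‖z‖⁻¹ • z ∈ A}) :=
    hΘ.measurable (hconemeas A hAmeas)
  have hTImeas : MeasurableSet (((Theta k b x) ⁻¹'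
      {z : EuclideanSpace ℝ (Fin (k + 2)) | z ≠ 0 ∧ ‖z‖ < 1 ∧ ‖z‖⁻¹ • z ∈ A})
      ∩ Set.univ ×ˢ Cslice t) :=
    hTAmeas.inter (MeasurableSet.univ.prod (Cslice_meas t))
  rw [Measure.prod_apply hTAmeas, Measure.prod_apply hTImeas,
    ← lintegral_const_mul _ (measurable_measure_prodMk_left hTAmeas)]
  refine lintegral_mono fun u => ?_
  have h := hfiber u
  rwa [show Prod.mk u ⁻¹' (((Theta k b x) ⁻¹'
      {z : EuclideanSpace ℝ (Fin (k + 2)) | z ≠ 0 ∧ ‖z‖ < 1 ∧ ‖z‖⁻¹ • z ∈ A})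
      ∩ Set.univ ×ˢ Cslice t)
    = (Prod.mk u ⁻¹' ((Theta k b x) ⁻¹'
      {z : EuclideanSpace ℝ (Fin (k + 2)) | z ≠ 0 ∧ ‖z‖ < 1 ∧ ‖z‖⁻¹ • z ∈ A})) ∩ Cslice t
    from by rw [Set.preimage_inter, Set.mk_preimage_prod_right (Set.mem_univ u)]]


end Helpers

theorem cap_positive_correlation (d : ℕ) (hd : 2 ≤ d) (p : ℝ) (hp : 0 < p) (hp' : p ≤ 1 / 2)
    (t : ℝ)
    (ht : ∀ x ∈ Metric.sphere (0 : EuclideanSpace ℝ (Fin d)) 1,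
      sphereUniform d {w | t ≤ ⟪w, x⟫} = ENNReal.ofReal p)
    (A : Set (EuclideanSpace ℝ (Fin d))) (hAmeas : MeasurableSet A)
    (hAsub : A ⊆ Metric.sphere (0 : EuclideanSpace ℝ (Fin d)) 1)
    (hconv : GeodesicConvex d A)
    (x : EuclideanSpace ℝ (Fin d)) (hx : x ∈ A) :
    ENNReal.ofReal p * sphereUniform d A ≤ sphereUniform d (A ∩ {w | t ≤ ⟪w, x⟫}) := by
  obtain ⟨k, rfl⟩ : ∃ k, d = k + 2 := ⟨d - 2, by omega⟩
  exact cap_aux k p hp hp' t ht A hAmeas hAsub hconv x hx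

end
end

section
/- There exist constants ε, C > 0 (depending only on p) such that for all integers n, d ≥ 2 with log n < ε·d, the probability that the Gaussian random geometric graph GRGG(n,p) is a complete graph satisfies P(Ẽ(n,d,p)) ≥ exp(−C · n · √(d · log n)). -/
open MeasureTheory ProbabilityTheory Real
open scoped RealInnerProductSpace ENNReal NNReal

noncomputable section

/-! ### Auxiliary lemmas -/

namespace GaussCliqueAux

open Set

lemma sqrt_two_pi_le_exp_one : Real.sqrt (2 * π) ≤ Real.exp 1 := by
  have h1 : π < 3.15 := Real.pi_lt_d2
  have h2 : (2.7182818283 : ℝ) < Real.exp 1 := Real.exp_one_gt_d9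
  have h3 : (2 * π) ≤ (Real.exp 1)^2 := by nlinarith
  calc Real.sqrt (2 * π) ≤ Real.sqrt ((Real.exp 1)^2) := Real.sqrt_le_sqrt h3
    _ = Real.exp 1 := Real.sqrt_sq (Real.exp_pos 1).le

lemma gauss_pdf_mul (t x : ℝ) :
    gaussianPDFReal 0 1 x * Real.exp (t * x) = Real.exp (t^2/2) * gaussianPDFReal t 1 x := by
  simp only [gaussianPDFReal, NNReal.coe_one, mul_one, sub_zero]
  rw [mul_assoc, mul_comm (Real.exp (t^2/2)), mul_assoc]
  congr 1
  rw [← Real.exp_add, ← Real.exp_add]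
  congr 1
  ring

lemma lintegral_exp_mul_gauss (t : ℝ) :
    ∫⁻ x, ENNReal.ofReal (Real.exp (t * x)) ∂(gaussianReal 0 1)
      = ENNReal.ofReal (Real.exp (t^2/2)) := by
  rw [gaussianReal_of_var_ne_zero 0 one_ne_zero,
    lintegral_withDensity_eq_lintegral_mul _ (measurable_gaussianPDF 0 1)
      (by fun_prop)]
  have h : ∀ x : ℝ, (gaussianPDF 0 1 * fun x => ENNReal.ofReal (Real.exp (t * x))) x
      = ENNReal.ofReal (Real.exp (t^2/2)) * gaussianPDF t 1 x := by
    intro x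
    simp only [Pi.mul_apply, gaussianPDF]
    rw [← ENNReal.ofReal_mul (gaussianPDFReal_nonneg 0 1 x), gauss_pdf_mul,
      ENNReal.ofReal_mul (Real.exp_nonneg _)]
  simp_rw [h]
  rw [lintegral_const_mul _ (measurable_gaussianPDF t 1),
    lintegral_gaussianPDF_eq_one t one_ne_zero, mul_one]

lemma one_sub_bound {t : ℝ} (ht0 : 0 ≤ t) (ht : t ≤ 1/2) : Real.exp (-(2*t)) ≤ 1 - t := by
  have h1 : (2*t) + 1 ≤ Real.exp (2*t) := Real.add_one_le_exp _
  have h2 : Real.exp (-(2*t)) * Real.exp (2*t) = 1 := by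
    rw [← Real.exp_add]; simp
  have h3 : (0:ℝ) < Real.exp (2*t) := Real.exp_pos _
  nlinarith [Real.exp_pos (-(2*t))]

lemma inv_sqrt_one_sub_le {c : ℝ} (hc : c^2 ≤ 1/2) :
    (Real.sqrt (1 - c^2))⁻¹ ≤ Real.exp (c^2) := by
  have h0 : (0:ℝ) ≤ c^2 := sq_nonneg c
  have h1 : Real.exp (-(2*c^2)) ≤ 1 - c^2 := one_sub_bound h0 hc
  have h2 : Real.exp (-c^2) ≤ Real.sqrt (1 - c^2) := by
    rw [show Real.exp (-c^2) = Real.sqrt (Real.exp (-(2*c^2))) by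
      rw [show (-(2*c^2) : ℝ) = (-c^2) + (-c^2) by ring, Real.exp_add,
        Real.sqrt_mul_self (Real.exp_pos _).le]]
    exact Real.sqrt_le_sqrt h1
  have h3 : (0:ℝ) < Real.sqrt (1 - c^2) := lt_of_lt_of_le (Real.exp_pos _) h2
  rw [inv_le_comm₀ h3 (Real.exp_pos _), ← Real.exp_neg]
  exact h2

lemma lintegral_exp_sq_gauss {c : ℝ} (hc : c^2 ≤ 1/2) :
    ∫⁻ x, ENNReal.ofReal (Real.exp (c^2 * x^2 / 2)) ∂(gaussianReal 0 1)
      ≤ ENNReal.ofReal (Real.exp (c^2)) := by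
  have hb : (0:ℝ) < (1 - c^2)/2 := by nlinarith [sq_nonneg c]
  rw [gaussianReal_of_var_ne_zero 0 one_ne_zero,
    lintegral_withDensity_eq_lintegral_mul _ (measurable_gaussianPDF 0 1) (by fun_prop)]
  have key : ∀ x : ℝ, (gaussianPDF 0 1 * fun x => ENNReal.ofReal (Real.exp (c^2 * x^2 / 2))) x
      = ENNReal.ofReal ((Real.sqrt (2*π))⁻¹) * ENNReal.ofReal (Real.exp (-((1-c^2)/2) * x^2)) := by
    intro x
    simp only [Pi.mul_apply, gaussianPDF]
    rw [← ENNReal.ofReal_mul (gaussianPDFReal_nonneg 0 1 x),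
      ← ENNReal.ofReal_mul (by positivity)]
    congr 1
    simp only [gaussianPDFReal, NNReal.coe_one, mul_one, sub_zero]
    rw [mul_assoc]
    congr 1
    rw [← Real.exp_add]
    congr 1
    ring
  simp_rw [key]
  rw [lintegral_const_mul _ (by fun_prop)]
  rw [← ofReal_integral_eq_lintegral_ofReal (integrable_exp_neg_mul_sq hb)
    (Filter.Eventually.of_forall fun x => (Real.exp_nonneg _))]
  rw [integral_gaussian, ← ENNReal.ofReal_mul (by positivity)]
  apply ENNReal.ofReal_le_ofReal
  have hc1 : (1 - c^2) ≠ 0 := by nlinarith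
  have hs2pi : Real.sqrt (2*π) ≠ 0 := by positivity
  have hval : (Real.sqrt (2*π))⁻¹ * Real.sqrt (π / ((1-c^2)/2)) = (Real.sqrt (1 - c^2))⁻¹ := by
    rw [show π / ((1-c^2)/2) = (2*π) / (1 - c^2) by field_simp,
      Real.sqrt_div (by positivity) (1 - c^2)]
    field_simp
  rw [hval]
  exact inv_sqrt_one_sub_le hc

lemma gauss_tail_lower {s : ℝ} (hs : 0 ≤ s) :
    ENNReal.ofReal (Real.exp (-(s+1)^2/2 - 1)) ≤ gaussianReal 0 1 (Ici s) := by
  have hsub : Ico s (s+1) ⊆ Ici s := Ico_subset_Ici_self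
  refine le_trans ?_ (measure_mono hsub)
  rw [gaussianReal_apply 0 one_ne_zero]
  have hpt : ∀ x ∈ Ico s (s+1),
      ENNReal.ofReal (Real.exp (-(s+1)^2/2 - 1)) ≤ gaussianPDF 0 1 x := by
    intro x hx
    rw [gaussianPDF]
    apply ENNReal.ofReal_le_ofReal
    simp only [gaussianPDFReal, NNReal.coe_one, mul_one, sub_zero]
    have hx2 : x^2 ≤ (s+1)^2 := by
      have h1 : 0 ≤ x := le_trans hs hx.1
      nlinarith [hx.1, hx.2]
    have h1 : Real.exp (-x^2/2) ≥ Real.exp (-(s+1)^2/2) := by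
      apply Real.exp_le_exp.mpr; linarith
    have h2 : (Real.sqrt (2*π))⁻¹ ≥ Real.exp (-1) := by
      rw [Real.exp_neg]
      exact inv_anti₀ (by positivity) sqrt_two_pi_le_exp_one
    calc Real.exp (-(s+1)^2/2 - 1) = Real.exp (-1) * Real.exp (-(s+1)^2/2) := by
          rw [← Real.exp_add]; ring_nf
      _ ≤ (Real.sqrt (2*π))⁻¹ * Real.exp (-x^2/2) := by
          apply mul_le_mul h2 h1 (Real.exp_pos _).le (by positivity)
  calc ENNReal.ofReal (Real.exp (-(s+1)^2/2 - 1))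
      = ENNReal.ofReal (Real.exp (-(s+1)^2/2 - 1)) * volume (Ico s (s+1)) := by
        rw [Real.volume_Ico, show s + 1 - s = 1 by ring, ENNReal.ofReal_one, mul_one]
    _ = ∫⁻ _ in Ico s (s+1), ENNReal.ofReal (Real.exp (-(s+1)^2/2 - 1)) := by
        rw [setLIntegral_const]
    _ ≤ ∫⁻ x in Ico s (s+1), gaussianPDF 0 1 x := by
        exact setLIntegral_mono (measurable_gaussianPDF 0 1) hpt

section PiLemmas

variable {X : Type*} [MeasurableSpace X] (μ : Measure X) [IsProbabilityMeasure μ]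

lemma lintegral_fin_pi_prod : ∀ (n : ℕ) (f : Fin n → X → ℝ≥0∞), (∀ i, Measurable (f i)) →
    ∫⁻ x : Fin n → X, ∏ i, f i (x i) ∂(Measure.pi fun _ => μ) = ∏ i, ∫⁻ y, f i y ∂μ := by
  intro n
  induction n with
  | zero =>
      intro f hf
      simp only [Finset.univ_eq_empty, Finset.prod_empty, lintegral_one, measure_univ]
  | succ n ih =>
      intro f hf
      have hmp := (measurePreserving_piFinSuccAbove (fun _ : Fin (n+1) => μ) 0)
      have hF : Measurable fun x : Fin (n+1) → X => ∏ i, f i (x i) :=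
        Finset.measurable_prod _ fun i _ => (hf i).comp (measurable_pi_apply i)
      have hpt : ∀ z : X × (Fin n → X),
          (∏ i, f i (((MeasurableEquiv.piFinSuccAbove (fun _ => X) 0).symm z) i))
            = f 0 z.1 * ∏ j, f (Fin.succ j) (z.2 j) := by
        intro z
        have h0 : ((MeasurableEquiv.piFinSuccAbove (fun _ => X) 0).symm z) 0 = z.1 := by
          simp [MeasurableEquiv.piFinSuccAbove_symm_apply]
        have hsucc : ∀ j : Fin n,
            ((MeasurableEquiv.piFinSuccAbove (fun _ => X) 0).symm z) (Fin.succ j) = z.2 j := by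
          intro j
          simp [MeasurableEquiv.piFinSuccAbove_symm_apply, Fin.zero_succAbove]
        rw [Fin.prod_univ_succ, h0]
        exact congrArg _ (Finset.prod_congr rfl fun j _ => by rw [hsucc])
      calc ∫⁻ x : Fin (n+1) → X, ∏ i, f i (x i) ∂(Measure.pi fun _ => μ)
          = ∫⁻ z : X × (Fin n → X),
              (∏ i, f i (((MeasurableEquiv.piFinSuccAbove (fun _ => X) 0).symm z) i))
              ∂(μ.prod (Measure.pi fun _ => μ)) :=
            ((hmp.symm (MeasurableEquiv.piFinSuccAbove (fun _ => X) 0)).lintegral_comp hF).symm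
        _ = ∫⁻ z : X × (Fin n → X), f 0 z.1 * ∏ j, f (Fin.succ j) (z.2 j)
              ∂(μ.prod (Measure.pi fun _ => μ)) := lintegral_congr hpt
        _ = (∫⁻ y, f 0 y ∂μ) * ∫⁻ x : Fin n → X, ∏ j, f (Fin.succ j) (x j)
              ∂(Measure.pi fun _ => μ) :=
            lintegral_prod_mul (hf 0).aemeasurable
              (Finset.measurable_prod _ fun j _ =>
                (hf (Fin.succ j)).comp (measurable_pi_apply j)).aemeasurable
        _ = ∏ i, ∫⁻ y, f i y ∂μ := by
            rw [ih _ (fun j => hf (Fin.succ j)), Fin.prod_univ_succ]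

lemma lintegral_pi_prod {ι : Type*} [Fintype ι] (f : ι → X → ℝ≥0∞)
    (hf : ∀ i, Measurable (f i)) :
    ∫⁻ x : ι → X, ∏ i, f i (x i) ∂(Measure.pi fun _ => μ) = ∏ i, ∫⁻ y, f i y ∂μ := by
  have e := (Fintype.equivFin ι).symm
  have hmp := measurePreserving_piCongrLeft (fun _ : ι => μ) e
  have hF : Measurable fun x : ι → X => ∏ i, f i (x i) :=
    Finset.measurable_prod _ fun i _ => (hf i).comp (measurable_pi_apply i)
  calc ∫⁻ x : ι → X, ∏ i, f i (x i) ∂(Measure.pi fun _ => μ)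
      = ∫⁻ g : Fin (Fintype.card ι) → X,
          ∏ i, f i ((MeasurableEquiv.piCongrLeft (fun _ => X) e) g i)
          ∂(Measure.pi fun _ => μ) := (hmp.lintegral_comp hF).symm
    _ = ∫⁻ g : Fin (Fintype.card ι) → X, ∏ j, f (e j) (g j) ∂(Measure.pi fun _ => μ) := by
        apply lintegral_congr
        intro g
        rw [← e.prod_comp]
        apply Finset.prod_congr rfl
        intro j _
        congr 1
        exact Equiv.piCongrLeft_apply_apply (fun _ => X) e g j
    _ = ∏ j, ∫⁻ y, f (e j) y ∂μ := lintegral_fin_pi_prod μ _ _ (fun j => hf (e j))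
    _ = ∏ i, ∫⁻ y, f i y ∂μ := e.prod_comp fun i => ∫⁻ y, f i y ∂μ

lemma pi_map_comp_inj {ι ι' : Type*} [Fintype ι] [Fintype ι'] (f : ι' → ι)
    (hf : Function.Injective f) :
    (Measure.pi fun _ : ι => μ).map (fun ω => ω ∘ f) = Measure.pi (fun _ : ι' => μ) := by
  classical
  have hmeas : Measurable fun ω : ι → X => ω ∘ f :=
    measurable_pi_iff.mpr fun i => measurable_pi_apply (f i)
  symm
  refine Measure.pi_eq fun s hs => ?_
  rw [Measure.map_apply hmeas (MeasurableSet.univ_pi hs)]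
  have hpre : (fun ω : ι → X => ω ∘ f) ⁻¹' (univ.pi s)
      = univ.pi (fun i : ι => if h : ∃ i', f i' = i then s h.choose else univ) := by
    ext ω
    simp only [mem_preimage, mem_pi, mem_univ, forall_true_left, true_implies]
    constructor
    · intro h i
      split
      · rename_i hex
        have hcs := hex.choose_spec
        have h2 := h hex.choose
        simp only [Function.comp_apply] at h2
        rwa [hcs] at h2
      · trivial
    · intro h i'
      have h2 := h (f i')
      rw [dif_pos ⟨i', rfl⟩] at h2
      have hch : (⟨i', rfl⟩ : ∃ j, f j = f i').choose = i' :=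
        hf (⟨i', rfl⟩ : ∃ j, f j = f i').choose_spec
      rwa [hch] at h2
  rw [hpre, Measure.pi_pi]
  set g : ι → ℝ≥0∞ := fun i => μ (if h : ∃ i', f i' = i then s h.choose else univ) with hg
  calc ∏ i : ι, g i = ∏ i ∈ Finset.univ.image f, g i := by
        refine (Finset.prod_subset (Finset.subset_univ _) ?_).symm
        intro i _ hi
        rw [hg]
        simp only []
        rw [dif_neg]
        · exact measure_univ
        · rintro ⟨i', rfl⟩
          exact hi (Finset.mem_image_of_mem f (Finset.mem_univ i'))
    _ = ∏ i' : ι', g (f i') := Finset.prod_image fun x _ y _ h => hf h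
    _ = ∏ i' : ι', μ (s i') := by
        apply Finset.prod_congr rfl
        intro i' _
        rw [hg]
        simp only []
        rw [dif_pos ⟨i', rfl⟩]
        exact congrArg μ (congrArg s (hf (⟨i', rfl⟩ : ∃ j, f j = f i').choose_spec))

lemma pair_mp {n : ℕ} {i j : Fin n} (hij : i ≠ j) :
    MeasurePreserving (fun b : Fin n → X => (b i, b j))
      (Measure.pi fun _ : Fin n => μ) (μ.prod μ) := by
  have hinj : Function.Injective ![i, j] := by
    intro a b hab
    fin_cases a <;> fin_cases b <;> simp_all [Matrix.cons_val_zero, Matrix.cons_val_one]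
  have h1 : MeasurePreserving (fun b : Fin n → X => b ∘ ![i, j])
      (Measure.pi fun _ => μ) (Measure.pi fun _ : Fin 2 => μ) :=
    ⟨measurable_pi_iff.mpr fun a => measurable_pi_apply _, pi_map_comp_inj μ _ hinj⟩
  have h2 := measurePreserving_finTwoArrow (α := X) μ
  have heq : (⇑(MeasurableEquiv.finTwoArrow (α := X)) ∘ fun b : Fin n → X => b ∘ ![i, j])
      = fun b => (b i, b j) := by
    funext b
    simp [MeasurableEquiv.finTwoArrow]
  exact heq ▸ (h2.comp h1)

end PiLemmas

lemma chernoff_pair {κ : Type*} [Fintype κ] (c u : ℝ) (hc : c^2 ≤ 1/2) :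
    ((Measure.pi fun _ : κ => gaussianReal 0 1).prod (Measure.pi fun _ : κ => gaussianReal 0 1))
      {xy : (κ → ℝ) × (κ → ℝ) | u ≤ c * ∑ k, xy.1 k * xy.2 k}
      ≤ ENNReal.ofReal (Real.exp ((Fintype.card κ : ℝ) * c^2 - u)) := by
  set γ : Measure ℝ := gaussianReal 0 1 with hγ
  set ρ : Measure (κ → ℝ) := Measure.pi fun _ : κ => γ with hρ
  have hSmeas : Measurable fun xy : (κ → ℝ) × (κ → ℝ) => ∑ k, xy.1 k * xy.2 k := by
    apply Finset.measurable_sum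
    intro k _
    exact ((measurable_pi_apply k).comp measurable_fst).mul
      ((measurable_pi_apply k).comp measurable_snd)
  have hfmeas : Measurable fun xy : (κ → ℝ) × (κ → ℝ) =>
      ENNReal.ofReal (Real.exp (c * ∑ k, xy.1 k * xy.2 k)) :=
    ENNReal.measurable_ofReal.comp (Real.measurable_exp.comp (hSmeas.const_mul c))
  have key : ∫⁻ xy, ENNReal.ofReal (Real.exp (c * ∑ k, xy.1 k * xy.2 k)) ∂(ρ.prod ρ)
      ≤ ENNReal.ofReal (Real.exp ((Fintype.card κ : ℝ) * c^2)) := by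
    rw [lintegral_prod _ hfmeas.aemeasurable]
    have inner : ∀ x : κ → ℝ,
        (∫⁻ y, ENNReal.ofReal (Real.exp (c * ∑ k, x k * y k)) ∂ρ)
          = ∏ k, ENNReal.ofReal (Real.exp ((c * x k)^2 / 2)) := by
      intro x
      have h1 : ∀ y : κ → ℝ, ENNReal.ofReal (Real.exp (c * ∑ k, x k * y k))
          = ∏ k, ENNReal.ofReal (Real.exp ((c * x k) * y k)) := by
        intro y
        rw [← ENNReal.ofReal_prod_of_nonneg (fun i _ => (Real.exp_nonneg _)), ← Real.exp_sum,
          Finset.mul_sum]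
        congr 2
        apply Finset.sum_congr rfl
        intro k _
        ring
      simp_rw [h1]
      have h2 := lintegral_pi_prod γ (fun k b => ENNReal.ofReal (Real.exp ((c * x k) * b)))
        (fun k => by fun_prop)
      refine Eq.trans h2 ?_
      apply Finset.prod_congr rfl
      intro k _
      exact lintegral_exp_mul_gauss (c * x k)
    simp_rw [inner]
    have h2 : ∀ x : κ → ℝ, (∏ k, ENNReal.ofReal (Real.exp ((c * x k)^2 / 2)))
        = ∏ k, ENNReal.ofReal (Real.exp (c^2 * (x k)^2 / 2)) := by
      intro x
      apply Finset.prod_congr rfl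
      intro k _
      rw [mul_pow]
    simp_rw [h2]
    have h3 := lintegral_pi_prod γ
      (fun (_k : κ) (b : ℝ) => ENNReal.ofReal (Real.exp (c^2 * b^2 / 2)))
      (fun k => by fun_prop)
    refine le_trans (le_of_eq h3) ?_
    calc ∏ _k : κ, ∫⁻ y, ENNReal.ofReal (Real.exp (c^2 * y^2 / 2)) ∂γ
        ≤ ∏ _k : κ, ENNReal.ofReal (Real.exp (c^2)) :=
          Finset.prod_le_prod' fun k _ => lintegral_exp_sq_gauss hc
      _ = ENNReal.ofReal (Real.exp ((Fintype.card κ : ℝ) * c^2)) := by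
          rw [Finset.prod_const, ← ENNReal.ofReal_pow (Real.exp_nonneg _), ← Real.exp_nat_mul]
          simp
  have markov : ENNReal.ofReal (Real.exp u) *
      (ρ.prod ρ) {xy : (κ → ℝ) × (κ → ℝ) | u ≤ c * ∑ k, xy.1 k * xy.2 k}
      ≤ ∫⁻ xy, ENNReal.ofReal (Real.exp (c * ∑ k, xy.1 k * xy.2 k)) ∂(ρ.prod ρ) := by
    refine le_trans ?_
      (mul_meas_ge_le_lintegral₀ hfmeas.aemeasurable (ENNReal.ofReal (Real.exp u)))
    apply mul_le_mul_right
    apply measure_mono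
    intro xy hxy
    exact ENNReal.ofReal_le_ofReal (Real.exp_le_exp.mpr hxy)
  calc (ρ.prod ρ) {xy : (κ → ℝ) × (κ → ℝ) | u ≤ c * ∑ k, xy.1 k * xy.2 k}
      = ENNReal.ofReal (Real.exp (-u)) * (ENNReal.ofReal (Real.exp u) *
          (ρ.prod ρ) {xy : (κ → ℝ) × (κ → ℝ) | u ≤ c * ∑ k, xy.1 k * xy.2 k}) := by
        rw [← mul_assoc, ← ENNReal.ofReal_mul (Real.exp_nonneg _), ← Real.exp_add]
        simp
    _ ≤ ENNReal.ofReal (Real.exp (-u)) * ENNReal.ofReal (Real.exp ((Fintype.card κ : ℝ) * c^2)) :=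
        mul_le_mul_right (le_trans markov key) _
    _ = ENNReal.ofReal (Real.exp ((Fintype.card κ : ℝ) * c^2 - u)) := by
        rw [← ENNReal.ofReal_mul (Real.exp_nonneg _), ← Real.exp_add]
        ring_nf

instance stdGaussian_prob (d : ℕ) : IsProbabilityMeasure (stdGaussian d) := by
  unfold _root_.stdGaussian
  exact Measure.isProbabilityMeasure_map (MeasurableEquiv.measurable _).aemeasurable

lemma inner_equiv_symm {d : ℕ} (f g : Fin d → ℝ) :
    ⟪(MeasurableEquiv.toLp 2 (Fin d → ℝ)) f,
      (MeasurableEquiv.toLp 2 (Fin d → ℝ)) g⟫ = ∑ k, f k * g k := by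
  rw [MeasurableEquiv.coe_toLp]
  simp [PiLp.inner_apply, RCLike.inner_apply, mul_comm]

def ψmap (d' : ℕ) : (ℝ × (Fin d' → ℝ)) → EuclideanSpace ℝ (Fin (d'+1)) :=
  ⇑(MeasurableEquiv.toLp 2 (Fin (d'+1) → ℝ)) ∘
    ⇑(MeasurableEquiv.piFinSuccAbove (fun _ : Fin (d'+1) => ℝ) 0).symm

lemma ψmap_mp (d' : ℕ) :
    MeasurePreserving (ψmap d')
      ((gaussianReal 0 1).prod (Measure.pi fun _ : Fin d' => gaussianReal 0 1))
      (stdGaussian (d'+1)) := by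
  have mp3 : MeasurePreserving (⇑(MeasurableEquiv.toLp 2 (Fin (d'+1) → ℝ)))
      (Measure.pi fun _ : Fin (d'+1) => gaussianReal 0 1) (stdGaussian (d'+1)) :=
    ⟨(MeasurableEquiv.toLp 2 (Fin (d'+1) → ℝ)).measurable, rfl⟩
  have mp2 := (measurePreserving_piFinSuccAbove
    (fun _ : Fin (d'+1) => gaussianReal 0 1) 0).symm
    (MeasurableEquiv.piFinSuccAbove (fun _ : Fin (d'+1) => ℝ) 0)
  exact mp3.comp mp2

lemma ψmap_apply_zero (d' : ℕ) (z : ℝ × (Fin d' → ℝ)) :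
    ψmap d' z 0 = z.1 := by
  simp [ψmap, MeasurableEquiv.piFinSuccAbove_symm_apply, MeasurableEquiv.coe_toLp]

lemma ψmap_apply_succ (d' : ℕ) (z : ℝ × (Fin d' → ℝ)) (j : Fin d') :
    ψmap d' z j.succ = z.2 j := by
  simp [ψmap, MeasurableEquiv.piFinSuccAbove_symm_apply, Fin.zero_succAbove,
    MeasurableEquiv.coe_toLp]

lemma inner_ψmap (d' : ℕ) (z w : ℝ × (Fin d' → ℝ)) :
    ⟪ψmap d' z, ψmap d' w⟫ = z.1 * w.1 + ∑ j : Fin d', z.2 j * w.2 j := by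
  have h1 : ⟪ψmap d' z, ψmap d' w⟫ = ∑ k : Fin (d'+1), ψmap d' z k * ψmap d' w k := by
    exact inner_equiv_symm _ _
  rw [h1, Fin.sum_univ_succ]
  simp only [ψmap_apply_zero, ψmap_apply_succ]

lemma cliqueSet_meas (n d : ℕ) (t : ℝ) : MeasurableSet (cliqueSet n d t) := by
  have h : cliqueSet n d t
      = ⋂ i, ⋂ j, ⋂ (_ : i < j), {X : Fin n → EuclideanSpace ℝ (Fin d) | t ≤ ⟪X i, X j⟫} := by
    ext X; simp [cliqueSet]
  rw [h]
  refine MeasurableSet.iInter fun i => MeasurableSet.iInter fun j =>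
    MeasurableSet.iInter fun _ => ?_
  exact measurableSet_le measurable_const ((measurable_pi_apply i).inner (measurable_pi_apply j))

end GaussCliqueAux

set_option maxHeartbeats 2000000 in
theorem gauss_clique_prob_bias_lower_bound (p : ℝ) (hp : 0 < p) (hp' : p ≤ 1 / 2) :
    ∃ ε C : ℝ, 0 < ε ∧ 0 < C ∧ ∀ n d : ℕ, 2 ≤ n → 2 ≤ d →
      Real.log (n : ℝ) < ε * (d : ℝ) → ∀ τ : ℝ, IsGaussThreshold d p τ →
        ENNReal.ofReal (Real.exp (-C * (n : ℝ) * Real.sqrt ((d : ℝ) * Real.log (n : ℝ)))) ≤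
          (Measure.pi fun _ : Fin n => stdGaussian d) (cliqueSet n d τ) := by
  classical
  open GaussCliqueAux in
  refine ⟨1/2, 10 - 2 * Real.log p, by norm_num, ?_, ?_⟩
  · have h := Real.log_nonpos hp.le (by linarith : p ≤ 1)
    linarith
  intro n d hn hd hlog τ hτ
  obtain ⟨d', rfl⟩ : ∃ d', d = d' + 1 := ⟨d - 1, by omega⟩
  set γ : Measure ℝ := gaussianReal 0 1 with hγdef
  -- basic real facts
  have hdpos : (0:ℝ) < ((d' + 1 : ℕ) : ℝ) := by positivity
  have hd2 : (2:ℝ) ≤ ((d' + 1 : ℕ) : ℝ) := by exact_mod_cast hd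
  have hnR : (2:ℝ) ≤ (n : ℝ) := by exact_mod_cast hn
  have hnpos : (0:ℝ) < (n : ℝ) := by linarith
  have hlogn2 : Real.log 2 ≤ Real.log (n : ℝ) := Real.log_le_log (by norm_num) hnR
  have hlog2half : (1/2 : ℝ) < Real.log 2 := by
    have := Real.log_two_gt_d9; linarith
  have hlognpos : (0:ℝ) < Real.log (n : ℝ) := by linarith
  set Cp : ℝ := 1 - Real.log p with hCpdef
  have hCp1 : 1 ≤ Cp := by
    have h := Real.log_nonpos hp.le (by linarith : p ≤ 1)
    rw [hCpdef]; linarith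
  set L : ℝ := Real.sqrt (((d' + 1 : ℕ) : ℝ) * Real.log (n : ℝ)) with hLdef
  have hL0 : 0 ≤ L := Real.sqrt_nonneg _
  have hL1 : 1 ≤ L := by
    rw [hLdef, show (1:ℝ) = Real.sqrt 1 by rw [Real.sqrt_one]]
    apply Real.sqrt_le_sqrt
    nlinarith
  have hsqrt4 : Real.sqrt 4 = 2 := by
    rw [show (4:ℝ) = 2^2 by norm_num, Real.sqrt_sq (by norm_num : (0:ℝ) ≤ 2)]
  have hsd2L : Real.sqrt ((d' + 1 : ℕ) : ℝ) ≤ 2 * L := by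
    rw [hLdef, ← hsqrt4, ← Real.sqrt_mul (by norm_num : (0:ℝ) ≤ 4)]
    apply Real.sqrt_le_sqrt
    nlinarith
  have hsdpos : (0:ℝ) < Real.sqrt ((d' + 1 : ℕ) : ℝ) := Real.sqrt_pos.mpr hdpos
  -- the threshold bound : τ ≤ Cp * sqrt d
  set c1 : ℝ := (Real.sqrt ((d' + 1 : ℕ) : ℝ))⁻¹ with hc1def
  have hc10 : 0 ≤ c1 := by positivity
  have hc1sq : c1^2 = (((d' + 1 : ℕ) : ℝ))⁻¹ := by
    rw [hc1def, inv_pow, Real.sq_sqrt hdpos.le]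
  have hc1half : c1^2 ≤ 1/2 := by
    rw [hc1sq]
    rw [show (1/2 : ℝ) = 2⁻¹ by norm_num]
    exact inv_anti₀ (by norm_num) hd2
  have hstd1 : MeasurePreserving (⇑(MeasurableEquiv.toLp 2 (Fin (d'+1) → ℝ)))
      (Measure.pi fun _ : Fin (d'+1) => γ) (stdGaussian (d'+1)) :=
    ⟨(MeasurableEquiv.toLp 2 (Fin (d'+1) → ℝ)).measurable, rfl⟩
  have hτbound : τ ≤ Cp * Real.sqrt ((d' + 1 : ℕ) : ℝ) := by
    have hstdmp := hstd1.prod hstd1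
    have hsetmeas : MeasurableSet {xy : EuclideanSpace ℝ (Fin (d'+1)) ×
        EuclideanSpace ℝ (Fin (d'+1)) | τ ≤ ⟪xy.1, xy.2⟫} :=
      measurableSet_le measurable_const (measurable_fst.inner measurable_snd)
    have hpre : (Prod.map (⇑(MeasurableEquiv.toLp 2 (Fin (d'+1) → ℝ)))
          (⇑(MeasurableEquiv.toLp 2 (Fin (d'+1) → ℝ)))) ⁻¹'
          {xy : EuclideanSpace ℝ (Fin (d'+1)) × EuclideanSpace ℝ (Fin (d'+1)) | τ ≤ ⟪xy.1, xy.2⟫}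
        = {xy : (Fin (d'+1) → ℝ) × (Fin (d'+1) → ℝ) | τ ≤ ∑ k, xy.1 k * xy.2 k} := by
      ext xy
      simp only [Set.mem_preimage, Set.mem_setOf_eq, Prod.map_fst, Prod.map_snd]
      rw [GaussCliqueAux.inner_equiv_symm]
    have hτval : ((Measure.pi fun _ : Fin (d'+1) => γ).prod
        (Measure.pi fun _ : Fin (d'+1) => γ))
        {xy : (Fin (d'+1) → ℝ) × (Fin (d'+1) → ℝ) | τ ≤ ∑ k, xy.1 k * xy.2 k}
        = ENNReal.ofReal p := by
      rw [← hpre, hstdmp.measure_preimage hsetmeas.nullMeasurableSet]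
      exact hτ
    have hchern : ENNReal.ofReal p ≤ ENNReal.ofReal (Real.exp (1 - c1 * τ)) := by
      calc ENNReal.ofReal p
          = ((Measure.pi fun _ : Fin (d'+1) => γ).prod (Measure.pi fun _ : Fin (d'+1) => γ))
            {xy : (Fin (d'+1) → ℝ) × (Fin (d'+1) → ℝ) | τ ≤ ∑ k, xy.1 k * xy.2 k} := hτval.symm
        _ ≤ ((Measure.pi fun _ : Fin (d'+1) => γ).prod (Measure.pi fun _ : Fin (d'+1) => γ))
            {xy : (Fin (d'+1) → ℝ) × (Fin (d'+1) → ℝ) | c1 * τ ≤ c1 * ∑ k, xy.1 k * xy.2 k} := by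
            apply measure_mono
            intro xy hxy
            exact mul_le_mul_of_nonneg_left hxy hc10
        _ ≤ ENNReal.ofReal (Real.exp ((Fintype.card (Fin (d'+1)) : ℝ) * c1^2 - c1 * τ)) :=
            GaussCliqueAux.chernoff_pair c1 (c1 * τ) hc1half
        _ = ENNReal.ofReal (Real.exp (1 - c1 * τ)) := by
            rw [Fintype.card_fin, hc1sq, mul_inv_cancel₀ hdpos.ne']
    have hple : p ≤ Real.exp (1 - c1 * τ) :=
      (ENNReal.ofReal_le_ofReal_iff (Real.exp_pos _).le).mp hchern
    have hplog : Real.log p ≤ 1 - c1 * τ := (Real.log_le_iff_le_exp hp).mpr hple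
    have h1 : τ * c1 ≤ Cp := by rw [hCpdef]; linarith [hplog]
    calc τ = τ * c1 * Real.sqrt ((d' + 1 : ℕ) : ℝ) := by
          rw [hc1def, mul_assoc, inv_mul_cancel₀ hsdpos.ne', mul_one]
      _ ≤ Cp * Real.sqrt ((d' + 1 : ℕ) : ℝ) := mul_le_mul_of_nonneg_right h1 hsdpos.le
  -- the parameters of the construction
  set m : ℝ := Cp * Real.sqrt ((d' + 1 : ℕ) : ℝ) + 5 * L with hmdef
  have hm0 : 0 ≤ m := by
    have h1 : (0:ℝ) ≤ Cp * Real.sqrt ((d' + 1 : ℕ) : ℝ) :=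
      mul_nonneg (by linarith) hsdpos.le
    rw [hmdef]; linarith
  set sv : ℝ := Real.sqrt m with hsvdef
  have hsv0 : 0 ≤ sv := Real.sqrt_nonneg _
  have hsvsq : sv * sv = m := Real.mul_self_sqrt hm0
  set c2 : ℝ := Real.sqrt (Real.log (n:ℝ) / ((d' + 1 : ℕ) : ℝ)) with hc2def
  have hc20 : 0 ≤ c2 := Real.sqrt_nonneg _
  have hc2sq : c2^2 = Real.log (n:ℝ) / ((d' + 1 : ℕ) : ℝ) := Real.sq_sqrt (by positivity)
  have hc2half : c2^2 ≤ 1/2 := by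
    rw [hc2sq, div_le_iff₀ hdpos]; linarith [hlog]
  have hc2L : c2 * L = Real.log (n:ℝ) := by
    rw [hc2def, hLdef, ← Real.sqrt_mul (by positivity)]
    rw [show Real.log (n:ℝ) / ((d' + 1 : ℕ) : ℝ) * (((d' + 1 : ℕ) : ℝ) * Real.log (n:ℝ))
      = (Real.log (n:ℝ))^2 by field_simp]
    exact Real.sqrt_sq hlognpos.le
  -- measures
  set ρ : Measure (Fin d' → ℝ) := Measure.pi fun _ : Fin d' => γ with hρdef
  set ν : Measure (ℝ × (Fin d' → ℝ)) := γ.prod ρ with hνdef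
  set μΩ : Measure (Fin n → ℝ × (Fin d' → ℝ)) := Measure.pi fun _ : Fin n => ν with hμΩdef
  haveI hρP : IsProbabilityMeasure ρ := by rw [hρdef]; infer_instance
  haveI hνP : IsProbabilityMeasure ν := by rw [hνdef]; infer_instance
  haveI hμΩP : IsProbabilityMeasure μΩ := by rw [hμΩdef]; infer_instance
  haveI hpiρP : IsProbabilityMeasure (Measure.pi fun _ : Fin n => ρ) := by infer_instance
  have hT : MeasurePreserving
      (fun ω : Fin n → ℝ × (Fin d' → ℝ) => fun i => GaussCliqueAux.ψmap d' (ω i))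
      μΩ (Measure.pi fun _ : Fin n => stdGaussian (d'+1)) :=
    measurePreserving_pi _ _ (fun _ => GaussCliqueAux.ψmap_mp d')
  have hZ := measurePreserving_arrowProdEquivProdArrow ℝ (Fin d' → ℝ) (Fin n)
    (fun _ => γ) (fun _ => ρ)
  -- the events
  set Aset : Set (Fin n → ℝ) := Set.univ.pi fun _ => Set.Ici sv with hAdef
  set Bset : Set (Fin n → Fin d' → ℝ) :=
    {b | ∀ i j : Fin n, i < j → τ - m ≤ ∑ k, b i k * b j k} with hBdef
  have hAmeas : MeasurableSet Aset := MeasurableSet.univ_pi fun _ => measurableSet_Ici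
  have hBmeas : MeasurableSet Bset := by
    have h : Bset = ⋂ i, ⋂ j, ⋂ (_ : i < j),
        {b : Fin n → Fin d' → ℝ | τ - m ≤ ∑ k, b i k * b j k} := by
      ext b; simp [hBdef]
    rw [h]
    refine MeasurableSet.iInter fun i => MeasurableSet.iInter fun j =>
      MeasurableSet.iInter fun _ => ?_
    apply measurableSet_le measurable_const
    apply Finset.measurable_sum
    intro k _
    fun_prop
  have hZ1 : ∀ ω : Fin n → ℝ × (Fin d' → ℝ), ∀ i : Fin n,
      (((MeasurableEquiv.arrowProdEquivProdArrow ℝ (Fin d' → ℝ) (Fin n))) ω).1 i = (ω i).1 :=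
    fun _ _ => rfl
  have hZ2 : ∀ ω : Fin n → ℝ × (Fin d' → ℝ), ∀ i : Fin n,
      (((MeasurableEquiv.arrowProdEquivProdArrow ℝ (Fin d' → ℝ) (Fin n))) ω).2 i = (ω i).2 :=
    fun _ _ => rfl
  -- the inclusion of events
  have hsubset : (⇑(MeasurableEquiv.arrowProdEquivProdArrow ℝ (Fin d' → ℝ) (Fin n))) ⁻¹'
        (Aset ×ˢ Bset)
      ⊆ (fun ω : Fin n → ℝ × (Fin d' → ℝ) => fun i => GaussCliqueAux.ψmap d' (ω i)) ⁻¹'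
        cliqueSet n (d'+1) τ := by
    intro ω hω
    rw [Set.mem_preimage, Set.mem_prod] at hω
    obtain ⟨hA, hB⟩ := hω
    intro i j hij
    rw [GaussCliqueAux.inner_ψmap]
    have hai : sv ≤ (ω i).1 := by
      have := (Set.mem_pi.mp hA) i (Set.mem_univ i)
      rwa [hZ1] at this
    have haj : sv ≤ (ω j).1 := by
      have := (Set.mem_pi.mp hA) j (Set.mem_univ j)
      rwa [hZ1] at this
    have hmle : m ≤ (ω i).1 * (ω j).1 := by
      calc m = sv * sv := hsvsq.symm
        _ ≤ (ω i).1 * (ω j).1 := mul_le_mul hai haj hsv0 (hsv0.trans hai)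
    have hbsum : τ - m ≤ ∑ k, (ω i).2 k * (ω j).2 k := by
      have hmem := hB
      rw [hBdef] at hmem
      have h2 := hmem i j hij
      simp_rw [hZ2] at h2
      exact h2
    linarith
  -- factorization of the measure
  have hprodmeas : μΩ ((⇑(MeasurableEquiv.arrowProdEquivProdArrow ℝ (Fin d' → ℝ) (Fin n))) ⁻¹'
        (Aset ×ˢ Bset))
      = (Measure.pi fun _ : Fin n => γ) Aset * (Measure.pi fun _ : Fin n => ρ) Bset := by
    rw [hZ.measure_preimage (hAmeas.prod hBmeas).nullMeasurableSet, Measure.prod_prod]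
  have hAval : (Measure.pi fun _ : Fin n => γ) Aset = (γ (Set.Ici sv))^n := by
    rw [hAdef, Measure.pi_pi, Finset.prod_const, Finset.card_univ, Fintype.card_fin]
  have hBlow : ENNReal.ofReal (Real.exp (-L)) ≤ (Measure.pi fun _ : Fin n => ρ) Bset := by
    set Echer : Set ((Fin d' → ℝ) × (Fin d' → ℝ)) :=
      {xy | 5 * Real.log (n:ℝ) ≤ (-c2) * ∑ k, xy.1 k * xy.2 k} with hEdef
    have hEmeas : MeasurableSet Echer := by
      apply measurableSet_le measurable_const
      apply Measurable.const_mul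
      apply Finset.measurable_sum
      intro k _
      exact ((measurable_pi_apply k).comp measurable_fst).mul
        ((measurable_pi_apply k).comp measurable_snd)
    have hpairbound : ∀ q : Fin n × Fin n, q.1 ≠ q.2 →
        (Measure.pi fun _ : Fin n => ρ) ((fun b => (b q.1, b q.2)) ⁻¹' Echer)
          ≤ ENNReal.ofReal (Real.exp (-4 * Real.log (n:ℝ))) := by
      intro q hq
      have hmp := GaussCliqueAux.pair_mp (μ := ρ) hq
      rw [hmp.measure_preimage hEmeas.nullMeasurableSet]
      refine le_trans
        (GaussCliqueAux.chernoff_pair (-c2) (5 * Real.log (n:ℝ)) (by rwa [neg_sq])) ?_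
      apply ENNReal.ofReal_le_ofReal
      apply Real.exp_le_exp.mpr
      have hcard : (Fintype.card (Fin d') : ℝ) * (-c2)^2 ≤ Real.log (n:ℝ) := by
        rw [Fintype.card_fin, neg_sq, hc2sq]
        have hd'le : (d' : ℝ) ≤ ((d' + 1 : ℕ) : ℝ) := by push_cast; linarith
        have hdiv0 : 0 ≤ Real.log (n:ℝ) / ((d' + 1 : ℕ) : ℝ) := by positivity
        have h1 := mul_le_mul_of_nonneg_right hd'le hdiv0
        rwa [show ((d' + 1 : ℕ) : ℝ) * (Real.log (n:ℝ) / ((d' + 1 : ℕ) : ℝ)) = Real.log (n:ℝ)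
          from by field_simp] at h1
      linarith
    have hcover : Bsetᶜ ⊆ ⋃ q : Fin n × Fin n,
        {b : Fin n → Fin d' → ℝ | q.1 < q.2 ∧ (b q.1, b q.2) ∈ Echer} := by
      intro b hb
      simp only [Set.mem_compl_iff, hBdef, Set.mem_setOf_eq] at hb
      push_neg at hb
      obtain ⟨i, j, hij, hlt⟩ := hb
      refine Set.mem_iUnion.mpr ⟨(i,j), hij, ?_⟩
      have hτm : τ - m ≤ -(5*L) := by rw [hmdef]; linarith [hτbound]
      have hsum : ∑ k, b i k * b j k < -(5*L) := lt_of_lt_of_le hlt hτm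
      have h5 : c2 * (5*L) = 5 * Real.log (n:ℝ) := by
        rw [show c2*(5*L) = 5*(c2*L) by ring, hc2L]
      show 5 * Real.log (n:ℝ) ≤ (-c2) * ∑ k, b i k * b j k
      calc 5 * Real.log (n:ℝ) = c2 * (5 * L) := h5.symm
        _ ≤ c2 * (-(∑ k, b i k * b j k)) := mul_le_mul_of_nonneg_left (by linarith) hc20
        _ = (-c2) * ∑ k, b i k * b j k := by ring
    have hcompl : (Measure.pi fun _ : Fin n => ρ) Bsetᶜ ≤ ENNReal.ofReal (1/4) := by
      calc (Measure.pi fun _ : Fin n => ρ) Bsetᶜ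
          ≤ (Measure.pi fun _ : Fin n => ρ) (⋃ q : Fin n × Fin n,
            {b : Fin n → Fin d' → ℝ | q.1 < q.2 ∧ (b q.1, b q.2) ∈ Echer}) :=
            measure_mono hcover
        _ ≤ ∑' q : Fin n × Fin n, (Measure.pi fun _ : Fin n => ρ)
            {b : Fin n → Fin d' → ℝ | q.1 < q.2 ∧ (b q.1, b q.2) ∈ Echer} :=
            measure_iUnion_le _
        _ ≤ ∑' _q : Fin n × Fin n, ENNReal.ofReal (Real.exp (-4 * Real.log (n:ℝ))) := by
            apply ENNReal.tsum_le_tsum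
            intro q
            by_cases hq : q.1 < q.2
            · refine le_trans (measure_mono ?_) (hpairbound q (ne_of_lt hq))
              intro b hb
              exact hb.2
            · have hempty : {b : Fin n → Fin d' → ℝ | q.1 < q.2 ∧ (b q.1, b q.2) ∈ Echer}
                  = ∅ := by
                ext b; simp [hq]
              rw [hempty]
              simp
        _ = (n*n : ℕ) • ENNReal.ofReal (Real.exp (-4 * Real.log (n:ℝ))) := by
            rw [tsum_fintype, Finset.sum_const, Finset.card_univ, Fintype.card_prod,
              Fintype.card_fin]
        _ ≤ ENNReal.ofReal (1/4) := by
            rw [nsmul_eq_mul, ← ENNReal.ofReal_natCast,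
              ← ENNReal.ofReal_mul (by positivity)]
            apply ENNReal.ofReal_le_ofReal
            have hnn : ((n*n : ℕ):ℝ) = (n:ℝ)^2 := by push_cast; ring
            have hexp : Real.exp (-4 * Real.log (n:ℝ)) = ((n:ℝ)^4)⁻¹ := by
              rw [show (-4:ℝ) * Real.log (n:ℝ) = -(((4:ℕ):ℝ) * Real.log (n:ℝ)) by norm_num,
                Real.exp_neg, Real.exp_nat_mul, Real.exp_log hnpos]
            rw [hnn, hexp]
            have hid : (n:ℝ)^2 * ((n:ℝ)^4)⁻¹ = ((n:ℝ)^2)⁻¹ := by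
              field_simp
            rw [hid, show (1/4:ℝ) = (4:ℝ)⁻¹ by norm_num]
            have h4n : (4:ℝ) ≤ (n:ℝ)^2 := by nlinarith [hnR]
            exact inv_anti₀ (by norm_num) h4n
    have hBc : (Measure.pi fun _ : Fin n => ρ) Bset
        = 1 - (Measure.pi fun _ : Fin n => ρ) Bsetᶜ := by
      have h := measure_compl (μ := Measure.pi fun _ : Fin n => ρ) hBmeas.compl
        (measure_ne_top _ _)
      rw [compl_compl] at h
      rw [h, measure_univ]
    rw [hBc]
    have hhalf : ENNReal.ofReal (Real.exp (-L)) + ENNReal.ofReal (1/4) ≤ 1 := by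
      rw [← ENNReal.ofReal_add (Real.exp_nonneg _) (by norm_num), ← ENNReal.ofReal_one]
      apply ENNReal.ofReal_le_ofReal
      have hexp1 : Real.exp (-L) ≤ Real.exp (-1) := Real.exp_le_exp.mpr (by linarith)
      have h2 : Real.exp (-1) ≤ 1/2 := by
        rw [Real.exp_neg, show (1/2:ℝ) = 2⁻¹ by norm_num]
        exact inv_anti₀ (by norm_num) (by have := Real.add_one_le_exp 1; linarith)
      linarith
    calc ENNReal.ofReal (Real.exp (-L)) ≤ 1 - ENNReal.ofReal (1/4) :=
          ENNReal.le_sub_of_add_le_right ENNReal.ofReal_ne_top hhalf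
      _ ≤ 1 - (Measure.pi fun _ : Fin n => ρ) Bsetᶜ := tsub_le_tsub_left hcompl 1
  have hfinal : ENNReal.ofReal (Real.exp (-(10 - 2 * Real.log p) * (n:ℝ) *
        Real.sqrt (((d' + 1 : ℕ) : ℝ) * Real.log (n:ℝ))))
      ≤ (ENNReal.ofReal (Real.exp (-(sv+1)^2/2 - 1)))^n * ENNReal.ofReal (Real.exp (-L)) := by
    rw [← ENNReal.ofReal_pow (Real.exp_nonneg _), ← ENNReal.ofReal_mul (by positivity),
      ← Real.exp_nat_mul, ← Real.exp_add]
    apply ENNReal.ofReal_le_ofReal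
    apply Real.exp_le_exp.mpr
    rw [← hLdef]
    have hsq : (sv+1)^2/2 + 1 ≤ 2*Cp*L + 7*L := by
      have h2 : Cp * Real.sqrt ((d' + 1 : ℕ) : ℝ) ≤ Cp * (2*L) :=
        mul_le_mul_of_nonneg_left hsd2L (by linarith)
      nlinarith [sq_nonneg (sv - 1), hsvsq, hL1, hm0]
    nlinarith [mul_le_mul_of_nonneg_left hsq (by linarith : (0:ℝ) ≤ (n:ℝ)),
      mul_nonneg (by linarith : (0:ℝ) ≤ (n:ℝ) - 1) hL0, hCp1, hL1]
  calc ENNReal.ofReal (Real.exp (-(10 - 2 * Real.log p) * (n:ℝ) *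
        Real.sqrt (((d' + 1 : ℕ) : ℝ) * Real.log (n:ℝ))))
      ≤ (ENNReal.ofReal (Real.exp (-(sv+1)^2/2 - 1)))^n * ENNReal.ofReal (Real.exp (-L)) :=
        hfinal
    _ ≤ (γ (Set.Ici sv))^n * (Measure.pi fun _ : Fin n => ρ) Bset := by
        apply mul_le_mul'
        · exact pow_le_pow_left' (GaussCliqueAux.gauss_tail_lower hsv0) n
        · exact hBlow
    _ = (Measure.pi fun _ : Fin n => γ) Aset * (Measure.pi fun _ : Fin n => ρ) Bset := by
        rw [hAval]
    _ = μΩ ((⇑(MeasurableEquiv.arrowProdEquivProdArrow ℝ (Fin d' → ℝ) (Fin n))) ⁻¹'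
        (Aset ×ˢ Bset)) := hprodmeas.symm
    _ ≤ μΩ ((fun ω : Fin n → ℝ × (Fin d' → ℝ) => fun i => GaussCliqueAux.ψmap d' (ω i)) ⁻¹'
        cliqueSet n (d'+1) τ) := measure_mono hsubset
    _ = (Measure.pi fun _ : Fin n => stdGaussian (d'+1)) (cliqueSet n (d'+1) τ) :=
        hT.measure_preimage (GaussCliqueAux.cliqueSet_meas n (d'+1) τ).nullMeasurableSet

end
end

section
/- There exists a constant C > 0 (depending only on p) such that for all integers n, d ≥ 2, the probability that the Gaussian random geometric graph GRGG(n,p) is a complete graph satisfies P(Ẽ(n,d,p)) ≥ exp(−C · n · d). -/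
open MeasureTheory ProbabilityTheory Real Filter
open scoped RealInnerProductSpace ENNReal NNReal

noncomputable section

lemma integrable_sq_mul_gauss : Integrable (fun x : ℝ => x ^ 2 * Real.exp (-(2⁻¹:ℝ) * x ^ 2)) := by
  have h := integrable_rpow_mul_exp_neg_mul_sq (b := 2⁻¹) (by norm_num) (s := 2) (by norm_num)
  refine h.congr (Filter.Eventually.of_forall fun x => ?_)
  simp only [show ((2:ℝ)) = ((2:ℕ):ℝ) by norm_num, Real.rpow_natCast]

lemma integral_sq_gaussian : ∫ x : ℝ, x ^ 2 * Real.exp (-(2⁻¹ : ℝ) * x ^ 2) = Real.sqrt (2 * π) := by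
  have hb : (0:ℝ) < 2⁻¹ := by norm_num
  have hint2 : Integrable (fun x : ℝ => Real.exp (-(2⁻¹:ℝ) * x ^ 2)) :=
    integrable_exp_neg_mul_sq hb
  have hint1 := integrable_sq_mul_gauss
  -- FTC on the whole line with f x = -x * exp(-x²/2)
  have hderiv : ∀ x : ℝ, HasDerivAt (fun x : ℝ => -x * Real.exp (-(2⁻¹:ℝ) * x ^ 2))
      (x ^ 2 * Real.exp (-(2⁻¹:ℝ) * x ^ 2) - Real.exp (-(2⁻¹:ℝ) * x ^ 2)) x := by
    intro x
    have h1 : HasDerivAt (fun x : ℝ => -(2⁻¹:ℝ) * x ^ 2) (-x) x := by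
      have := ((hasDerivAt_pow 2 x).const_mul (-(2⁻¹:ℝ)))
      simpa using this.congr_deriv (by ring)
    have h2 : HasDerivAt (fun x : ℝ => Real.exp (-(2⁻¹:ℝ) * x ^ 2))
        (Real.exp (-(2⁻¹:ℝ) * x ^ 2) * (-x)) x := h1.exp
    have h3 : HasDerivAt (fun x : ℝ => -x * Real.exp (-(2⁻¹:ℝ) * x ^ 2))
        (-1 * Real.exp (-(2⁻¹:ℝ) * x ^ 2) + -x * (Real.exp (-(2⁻¹:ℝ) * x ^ 2) * -x)) x :=
      (hasDerivAt_neg x).mul h2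
    convert h3 using 1
    ring
  have htop : Tendsto (fun x : ℝ => -x * Real.exp (-(2⁻¹:ℝ) * x ^ 2)) atTop (nhds 0) := by
    have hexp : Tendsto (fun x : ℝ => Real.exp (-(1/2 : ℝ) * x)) atTop (nhds 0) := by
      refine (Real.tendsto_exp_neg_atTop_nhds_zero.comp
        (Filter.Tendsto.const_mul_atTop (by norm_num : (0:ℝ) < 1/2) tendsto_id)).congr fun x => ?_
      simp [Function.comp]
    have h := (rpow_mul_exp_neg_mul_sq_isLittleO_exp_neg hb 1).tendsto_zero_of_tendsto hexp
    have : Tendsto (fun x : ℝ => x * Real.exp (-(2⁻¹:ℝ) * x ^ 2)) atTop (nhds 0) := by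
      refine h.congr' ?_
      filter_upwards [eventually_gt_atTop (0:ℝ)] with x hx
      rw [Real.rpow_one]
    simpa using this.neg
  have hbot : Tendsto (fun x : ℝ => -x * Real.exp (-(2⁻¹:ℝ) * x ^ 2)) atBot (nhds 0) := by
    have hexp : Tendsto (fun x : ℝ => Real.exp (-(1/2 : ℝ) * x)) atTop (nhds 0) := by
      refine (Real.tendsto_exp_neg_atTop_nhds_zero.comp
        (Filter.Tendsto.const_mul_atTop (by norm_num : (0:ℝ) < 1/2) tendsto_id)).congr fun x => ?_
      simp [Function.comp]
    have h := (rpow_mul_exp_neg_mul_sq_isLittleO_exp_neg hb 1).tendsto_zero_of_tendsto hexp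
    have h' : Tendsto (fun x : ℝ => x * Real.exp (-(2⁻¹:ℝ) * x ^ 2)) atTop (nhds 0) := by
      refine h.congr' ?_
      filter_upwards [eventually_gt_atTop (0:ℝ)] with x hx
      rw [Real.rpow_one]
    have := h'.comp tendsto_neg_atBot_atTop
    refine this.congr (fun x => ?_)
    simp [Function.comp]
  have key := integral_of_hasDerivAt_of_tendsto hderiv (hint1.sub hint2) hbot htop
  rw [sub_zero] at key
  have hsplit : ∫ x : ℝ, (x ^ 2 * Real.exp (-(2⁻¹:ℝ) * x ^ 2) - Real.exp (-(2⁻¹:ℝ) * x ^ 2))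
      = (∫ x : ℝ, x ^ 2 * Real.exp (-(2⁻¹:ℝ) * x ^ 2)) - ∫ x : ℝ, Real.exp (-(2⁻¹:ℝ) * x ^ 2) :=
    integral_sub hint1 hint2
  have h2 : ∫ x : ℝ, Real.exp (-(2⁻¹:ℝ) * x ^ 2) = Real.sqrt (π / 2⁻¹) := integral_gaussian 2⁻¹
  have : (∫ x : ℝ, x ^ 2 * Real.exp (-(2⁻¹:ℝ) * x ^ 2)) - ∫ x : ℝ, Real.exp (-(2⁻¹:ℝ) * x ^ 2) = 0 := by
    rw [← hsplit, key]
  rw [sub_eq_zero] at this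
  rw [this, h2, show (π / 2⁻¹) = 2 * π by ring]

lemma pdf_eq (x : ℝ) : gaussianPDFReal 0 1 x = (Real.sqrt (2 * π))⁻¹ * Real.exp (-(2⁻¹:ℝ) * x ^ 2) := by
  simp only [gaussianPDFReal, NNReal.coe_one, mul_one, sub_zero]
  congr 1
  ring

lemma integral_pdf_sq : ∫ x : ℝ, gaussianPDFReal 0 1 x * x ^ 2 = 1 := by
  have h : ∀ x : ℝ, gaussianPDFReal 0 1 x * x ^ 2
      = (Real.sqrt (2 * π))⁻¹ * (x ^ 2 * Real.exp (-(2⁻¹:ℝ) * x ^ 2)) := by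
    intro x; rw [pdf_eq]; ring
  simp_rw [h]
  rw [integral_const_mul, integral_sq_gaussian, inv_mul_cancel₀]
  positivity

lemma lintegral_sq_gaussianReal :
    ∫⁻ x : ℝ, ENNReal.ofReal (x ^ 2) ∂(gaussianReal 0 1) = 1 := by
  rw [gaussianReal_of_var_ne_zero 0 one_ne_zero,
    lintegral_withDensity_eq_lintegral_mul _ (measurable_gaussianPDF 0 1)
      (by fun_prop : Measurable fun x : ℝ => ENNReal.ofReal (x ^ 2))]
  have : ∀ x : ℝ, (gaussianPDF 0 1 * fun x => ENNReal.ofReal (x ^ 2)) x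
      = ENNReal.ofReal (gaussianPDFReal 0 1 x * x ^ 2) := by
    intro x
    simp only [Pi.mul_apply, gaussianPDF]
    rw [← ENNReal.ofReal_mul (gaussianPDFReal_nonneg 0 1 x)]
  simp_rw [this]
  have hint : Integrable (fun x : ℝ => gaussianPDFReal 0 1 x * x ^ 2) := by
    have h := integrable_sq_mul_gauss.const_mul (Real.sqrt (2 * π))⁻¹
    refine h.congr (Filter.Eventually.of_forall fun x => ?_)
    simp only [pdf_eq]; ring
  rw [← ofReal_integral_eq_lintegral_ofReal hint (Filter.Eventually.of_forall fun x =>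
      mul_nonneg (gaussianPDFReal_nonneg 0 1 x) (sq_nonneg x)),
    integral_pdf_sq, ENNReal.ofReal_one]

instance (d : ℕ) : IsProbabilityMeasure (stdGaussian d) := by
  rw [_root_.stdGaussian]
  exact Measure.isProbabilityMeasure_map (MeasurableEquiv.measurable _).aemeasurable

lemma pi_map_eval {ι : Type*} [Fintype ι] [DecidableEq ι] {α : ι → Type*} [∀ i, MeasurableSpace (α i)]
    (μ : ∀ i, Measure (α i)) [∀ i, IsProbabilityMeasure (μ i)] (k : ι) :
    (Measure.pi μ).map (Function.eval k) = μ k := by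
  ext s hs
  rw [Measure.map_apply (measurable_pi_apply k) hs, Set.eval_preimage, Measure.pi_pi]
  rw [Fintype.prod_eq_single k]
  · simp
  · intro i hi
    simp [Function.update_of_ne hi]

lemma lintegral_eval {ι : Type*} [Fintype ι] [DecidableEq ι] {α : ι → Type*} [∀ i, MeasurableSpace (α i)]
    (μ : ∀ i, Measure (α i)) [∀ i, IsProbabilityMeasure (μ i)] (k : ι)
    {g : α k → ℝ≥0∞} (hg : Measurable g) :
    ∫⁻ y, g (y k) ∂(Measure.pi μ) = ∫⁻ x, g x ∂(μ k) := by
  rw [← pi_map_eval μ k, lintegral_map hg (measurable_pi_apply k)]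

/-- second moment of the standard gaussian in `ℝ^d` -/
lemma lintegral_normsq_stdGaussian (d : ℕ) :
    ∫⁻ x, ENNReal.ofReal (∑ k, (x k) ^ 2) ∂(stdGaussian d) = d := by
  rw [_root_.stdGaussian, lintegral_map (by fun_prop) (MeasurableEquiv.measurable _)]
  have h1 : ∀ y : Fin d → ℝ,
      ENNReal.ofReal (∑ k, ((MeasurableEquiv.toLp 2 (Fin d → ℝ) y) k) ^ 2)
        = ∑ k, ENNReal.ofReal ((y k) ^ 2) := by
    intro y
    rw [ENNReal.ofReal_sum_of_nonneg (fun k _ => sq_nonneg _)]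
    rfl
  simp_rw [h1]
  rw [lintegral_finset_sum _ (fun k _ => by fun_prop)]
  have h2 : ∀ k : Fin d, ∫⁻ y : Fin d → ℝ, ENNReal.ofReal ((y k) ^ 2)
      ∂(Measure.pi fun _ => gaussianReal 0 1) = 1 := by
    intro k
    have := lintegral_eval (α := fun _ : Fin d => ℝ) (fun _ => gaussianReal 0 1) k
      (g := fun x : ℝ => ENNReal.ofReal (x ^ 2)) (by fun_prop)
    rw [this]
    exact lintegral_sq_gaussianReal
  simp [h2]

lemma coord_measurable (d : ℕ) (k : Fin d) :
    Measurable fun x : EuclideanSpace ℝ (Fin d) => x k :=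
  (measurable_pi_apply k).comp (MeasurableEquiv.toLp 2 (Fin d → ℝ)).symm.measurable

lemma sumsq_measurable (d : ℕ) :
    Measurable fun x : EuclideanSpace ℝ (Fin d) => ENNReal.ofReal (∑ k, (x k) ^ 2) := by
  apply Measurable.ennreal_ofReal
  exact Finset.measurable_sum _ (fun k _ => (coord_measurable d k).pow_const 2)

/-- Markov: the Gaussian measure of `{∑ x_k² ≥ t}` is at most `d/t`. -/
lemma markov_normsq (d : ℕ) {t : ℝ} (ht : 0 < t) :
    stdGaussian d {x | t ≤ ∑ k, (x k) ^ 2} ≤ (d : ℝ≥0∞) / ENNReal.ofReal t := by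
  have h := meas_ge_le_lintegral_div (μ := stdGaussian d)
      (sumsq_measurable d).aemeasurable (ε := ENNReal.ofReal t)
      (by simpa using ht) ENNReal.ofReal_ne_top
  rw [lintegral_normsq_stdGaussian] at h
  refine le_trans (le_of_eq ?_) h
  congr 1
  ext x
  simp only [Set.mem_setOf_eq]
  rw [ENNReal.ofReal_le_ofReal_iff (Finset.sum_nonneg fun k _ => sq_nonneg _)]

lemma inner_le_max (d : ℕ) (x y : EuclideanSpace ℝ (Fin d)) :
    ⟪x, y⟫ ≤ max (∑ k, (x k) ^ 2) (∑ k, (y k) ^ 2) := by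
  have h1 : ⟪x, y⟫ = ∑ k, x k * y k := by
    simp [PiLp.inner_apply, RCLike.inner_apply, conj_trivial]
    exact Finset.sum_congr rfl fun _ _ => mul_comm _ _
  rw [h1]
  have h2 : ∑ k, x k * y k ≤ (∑ k, (x k) ^ 2 + ∑ k, (y k) ^ 2) / 2 := by
    rw [← Finset.sum_add_distrib, le_div_iff₀ (by norm_num : (0:ℝ) < 2), Finset.sum_mul]
    refine Finset.sum_le_sum fun k _ => ?_
    nlinarith [sq_nonneg (x k - y k)]
  refine h2.trans ?_
  have := le_max_left (∑ k, (x k) ^ 2) (∑ k, (y k) ^ 2)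
  have := le_max_right (∑ k, (x k) ^ 2) (∑ k, (y k) ^ 2)
  linarith
 
lemma tau_bound {p τ : ℝ} (hp : 0 < p) (hp1 : p ≤ 1) {d : ℕ} (hd : 1 ≤ d)
    (h : IsGaussThreshold d p τ) : τ ≤ 2 * d / p := by
  by_contra hlt
  push_neg at hlt
  have hτpos : 0 < τ := lt_trans (by positivity) hlt
  -- inclusion into union
  have hsub : {xy : EuclideanSpace ℝ (Fin d) × EuclideanSpace ℝ (Fin d) | τ ≤ ⟪xy.1, xy.2⟫}
      ⊆ ({x : EuclideanSpace ℝ (Fin d) | τ ≤ ∑ k, (x k) ^ 2} ×ˢ Set.univ)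
        ∪ (Set.univ ×ˢ {y : EuclideanSpace ℝ (Fin d) | τ ≤ ∑ k, (y k) ^ 2}) := by
    rintro ⟨x, y⟩ hxy
    simp only [Set.mem_setOf_eq] at hxy
    have := (hxy.trans (inner_le_max d x y))
    rcases le_max_iff.mp (le_refl (max (∑ k, (x k) ^ 2) (∑ k, (y k) ^ 2))) with _ | _
    · rcases max_cases (∑ k, (x k) ^ 2) (∑ k, (y k) ^ 2) with ⟨he, _⟩ | ⟨he, _⟩
      · left; exact ⟨by simpa [Set.mem_setOf_eq] using he ▸ this, Set.mem_univ _⟩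
      · right; exact ⟨Set.mem_univ _, by simpa [Set.mem_setOf_eq] using he ▸ this⟩
    · rcases max_cases (∑ k, (x k) ^ 2) (∑ k, (y k) ^ 2) with ⟨he, _⟩ | ⟨he, _⟩
      · left; exact ⟨by simpa [Set.mem_setOf_eq] using he ▸ this, Set.mem_univ _⟩
      · right; exact ⟨Set.mem_univ _, by simpa [Set.mem_setOf_eq] using he ▸ this⟩
  have hA : ((stdGaussian d).prod (stdGaussian d))
      ({x : EuclideanSpace ℝ (Fin d) | τ ≤ ∑ k, (x k) ^ 2} ×ˢ Set.univ)
      = stdGaussian d {x | τ ≤ ∑ k, (x k) ^ 2} := by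
    rw [Measure.prod_prod, measure_univ, mul_one]
  have hB : ((stdGaussian d).prod (stdGaussian d))
      (Set.univ ×ˢ {y : EuclideanSpace ℝ (Fin d) | τ ≤ ∑ k, (y k) ^ 2})
      = stdGaussian d {y | τ ≤ ∑ k, (y k) ^ 2} := by
    rw [Measure.prod_prod, measure_univ, one_mul]
  have hle : ENNReal.ofReal p ≤ 2 * ((d : ℝ≥0∞) / ENNReal.ofReal τ) := by
    rw [IsGaussThreshold] at h
    calc ENNReal.ofReal p = _ := h.symm
      _ ≤ _ := measure_mono hsub
      _ ≤ _ := measure_union_le _ _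
      _ ≤ 2 * ((d : ℝ≥0∞) / ENNReal.ofReal τ) := by
          rw [hA, hB, two_mul]
          exact add_le_add (markov_normsq d hτpos) (markov_normsq d hτpos)
  have hrhs : 2 * ((d : ℝ≥0∞) / ENNReal.ofReal τ) = ENNReal.ofReal (2 * d / τ) := by
    rw [ENNReal.ofReal_div_of_pos hτpos, ENNReal.ofReal_mul (by norm_num)]
    simp [ENNReal.ofReal_natCast, ENNReal.ofReal_ofNat, mul_div_assoc]
  rw [hrhs] at hle
  have hple : p ≤ 2 * d / τ := by
    rwa [ENNReal.ofReal_le_ofReal_iff (by positivity)] at hle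
  have : τ * p ≤ 2 * d := by
    rw [le_div_iff₀ hτpos] at hple
    linarith
  have : τ ≤ 2 * d / p := by
    rw [le_div_iff₀ hp]
    linarith
  linarith
lemma inner_eq_sum (d : ℕ) (x y : EuclideanSpace ℝ (Fin d)) : ⟪x, y⟫ = ∑ k, x k * y k := by
  simp [PiLp.inner_apply, RCLike.inner_apply, conj_trivial]
  exact Finset.sum_congr rfl fun _ _ => mul_comm _ _

/-- measure of the coordinate box under the standard gaussian -/
lemma stdGaussian_box (d : ℕ) (a : ℝ) :
    stdGaussian d {x : EuclideanSpace ℝ (Fin d) | ∀ k, x k ∈ Set.Icc a (a+1)}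
      = (gaussianReal 0 1 (Set.Icc a (a+1))) ^ d := by
  have hBmeas : MeasurableSet {x : EuclideanSpace ℝ (Fin d) | ∀ k, x k ∈ Set.Icc a (a+1)} := by
    have : {x : EuclideanSpace ℝ (Fin d) | ∀ k, x k ∈ Set.Icc a (a+1)}
        = ⋂ k, (fun x : EuclideanSpace ℝ (Fin d) => x k) ⁻¹' Set.Icc a (a+1) := by
      ext x; simp
    rw [this]
    exact MeasurableSet.iInter fun k => (coord_measurable d k) measurableSet_Icc
  rw [_root_.stdGaussian, Measure.map_apply (MeasurableEquiv.measurable _) hBmeas]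
  have hpre : (MeasurableEquiv.toLp 2 (Fin d → ℝ)) ⁻¹'
      {x : EuclideanSpace ℝ (Fin d) | ∀ k, x k ∈ Set.Icc a (a+1)}
      = Set.pi Set.univ (fun _ : Fin d => Set.Icc a (a+1)) := by
    ext y
    simp only [Set.mem_preimage, Set.mem_setOf_eq, Set.mem_pi, Set.mem_univ, forall_true_left]
    rfl
  rw [hpre, Measure.pi_pi]
  simp


theorem gauss_clique_prob_strong_bias_lower_bound (p : ℝ) (hp : 0 < p) (hp' : p ≤ 1 / 2) :
    ∃ C : ℝ, 0 < C ∧ ∀ n d : ℕ, 2 ≤ n → 2 ≤ d → ∀ τ : ℝ, IsGaussThreshold d p τ →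
      ENNReal.ofReal (Real.exp (-C * (n : ℝ) * (d : ℝ))) ≤
        (Measure.pi fun _ : Fin n => stdGaussian d) (cliqueSet n d τ) := by
  set a : ℝ := Real.sqrt (2 / p) with ha
  have ha0 : 0 < a := Real.sqrt_pos.mpr (by positivity)
  have hasq : a ^ 2 = 2 / p := Real.sq_sqrt (by positivity)
  set q : ℝ≥0∞ := gaussianReal 0 1 (Set.Icc a (a+1)) with hq
  have hqtop : q ≠ ⊤ := measure_ne_top _ _
  have hq1 : q ≤ 1 := prob_le_one
  have hq0 : q ≠ 0 := by
    intro h0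
    have hac := gaussianReal_absolutelyContinuous' 0 one_ne_zero
    have := hac h0
    rw [Real.volume_Icc] at this
    simp at this
  set q0 : ℝ := q.toReal with hq0def
  have hq0pos : 0 < q0 := ENNReal.toReal_pos hq0 hqtop
  have hq01 : q0 ≤ 1 := by
    rw [hq0def, ← ENNReal.toReal_one]
    exact ENNReal.toReal_mono ENNReal.one_ne_top hq1
  refine ⟨1 - Real.log q0, by nlinarith [Real.log_nonpos (le_of_lt hq0pos) hq01], ?_⟩
  intro n d hn hd τ hτ
  -- the box event is inside the clique event
  have hbox : Set.pi Set.univ (fun _ : Fin n =>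
      {x : EuclideanSpace ℝ (Fin d) | ∀ k, x k ∈ Set.Icc a (a+1)}) ⊆ cliqueSet n d τ := by
    intro X hX i j _
    have hXi := hX i (Set.mem_univ i)
    have hXj := hX j (Set.mem_univ j)
    have hττ : τ ≤ 2 * d / p := tau_bound hp (by linarith) (by omega) hτ
    have hsum : (d : ℝ) * a ^ 2 ≤ ∑ k, X i k * X j k := by
      calc (d : ℝ) * a ^ 2 = ∑ _k : Fin d, a * a := by
            simp [Finset.sum_const, pow_two]
        _ ≤ ∑ k, X i k * X j k := by
            refine Finset.sum_le_sum fun k _ => ?_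
            have h1 := (hXi k).1
            have h2 := (hXj k).1
            nlinarith
    rw [inner_eq_sum]
    have : 2 * d / p ≤ (d : ℝ) * a ^ 2 := by
      rw [hasq]
      exact le_of_eq (by ring)
    linarith
  refine le_trans ?_ (measure_mono hbox)
  have hpi : (Measure.pi fun _ : Fin n => stdGaussian d) (Set.pi Set.univ (fun _ : Fin n =>
      {x : EuclideanSpace ℝ (Fin d) | ∀ k, x k ∈ Set.Icc a (a+1)})) = q ^ (d * n) := by
    rw [Measure.pi_pi]
    simp only [Finset.prod_const, Finset.card_univ, Fintype.card_fin]
    rw [stdGaussian_box d a, ← hq, ← pow_mul]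
  rw [hpi]
  -- final numeric bound
  have hreal : Real.exp (-(1 - Real.log q0) * n * d) ≤ q0 ^ (n * d) := by
    have hcast : ((n * d : ℕ) : ℝ) = (n : ℝ) * d := by push_cast; ring
    rw [← Real.rpow_natCast q0 (n * d), Real.rpow_def_of_pos hq0pos, hcast]
    rw [Real.exp_le_exp]
    have hnd : (0:ℝ) ≤ (n : ℝ) * d := by positivity
    nlinarith
  calc ENNReal.ofReal (Real.exp (-(1 - Real.log q0) * n * d))
      ≤ ENNReal.ofReal (q0 ^ (n * d)) := ENNReal.ofReal_le_ofReal hreal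
    _ = (ENNReal.ofReal q0) ^ (n * d) := ENNReal.ofReal_pow (le_of_lt hq0pos) _
    _ = q ^ (n * d) := by rw [hq0def, ENNReal.ofReal_toReal hqtop]
    _ = q ^ (d * n) := by rw [mul_comm]

end
end

section
/- There exists a universal constant c₂ > 0 such that for all integers n, d ≥ 2 and all t > 0, if G_1,…,G_n are i.i.d. standard Gaussian vectors N(0, I_d) in ℝ^d and S = Σ_{1 ≤ i ≠ j ≤ n} ⟨G_i, G_j⟩, then P(|S| ≥ t) ≤ 2 · exp( −c₂ · min( t²/(n²·d), t/n ) ). -/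
open MeasureTheory ProbabilityTheory Real
open scoped RealInnerProductSpace ENNReal NNReal

noncomputable section

set_option maxHeartbeats 1000000 in
instance stdGaussian_isProb (d : ℕ) : IsProbabilityMeasure (stdGaussian d) := by
  unfold _root_.stdGaussian
  exact Measure.isProbabilityMeasure_map (MeasurableEquiv.toLp 2 (Fin d → ℝ)).measurable.aemeasurable

section AuxSConc


lemma integral_exp_linear_quadratic (b a : ℝ) (ha : 0 < a) :
    ∫ y : ℝ, exp (b * y - a * y ^ 2) = Real.sqrt (π / a) * exp (b ^ 2 / (4 * a)) := by
  have key : ∀ y : ℝ, exp (b * y - a * y ^ 2)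
      = exp (b ^ 2 / (4 * a)) * exp (-a * (y - b / (2 * a)) ^ 2) := by
    intro y
    rw [← Real.exp_add]
    congr 1
    field_simp
    ring
  simp_rw [key]
  rw [MeasureTheory.integral_const_mul]
  have : ∫ y : ℝ, exp (-a * (y - b / (2*a)) ^ 2) = ∫ y : ℝ, exp (-a * y ^ 2) := by
    exact integral_sub_right_eq_self (fun y => exp (-a * y ^ 2)) (b / (2*a))
  rw [this, integral_gaussian]
  ring

lemma integrable_exp_linear_quadratic (b a : ℝ) (ha : 0 < a) :
    Integrable (fun y : ℝ => exp (b * y - a * y ^ 2)) := by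
  have key : ∀ y : ℝ, exp (b * y - a * y ^ 2)
      = exp (b ^ 2 / (4 * a)) * exp (-a * (y - b / (2 * a)) ^ 2) := by
    intro y
    rw [← Real.exp_add]; congr 1; field_simp; ring
  simp_rw [key]
  exact ((integrable_exp_neg_mul_sq ha).comp_sub_right (b / (2*a))).const_mul _

lemma lintegral_gauss_exp (b a : ℝ) (ha : 0 < 2 * a + 1) :
    ∫⁻ y : ℝ, ENNReal.ofReal (exp (b * y - a * y ^ 2)) ∂(gaussianReal 0 1)
      = ENNReal.ofReal ((Real.sqrt (2 * a + 1))⁻¹ * exp (b ^ 2 / (2 * (2 * a + 1)))) := by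
  have ha' : 0 < a + 1/2 := by linarith
  rw [gaussianReal_of_var_ne_zero 0 one_ne_zero,
    lintegral_withDensity_eq_lintegral_mul _ (measurable_gaussianPDF 0 1)
      ((by fun_prop : Measurable fun y : ℝ => ENNReal.ofReal (exp (b * y - a * y ^ 2))))]
  have hpdf : ∀ y : ℝ, (gaussianPDF 0 1 * fun y => ENNReal.ofReal (exp (b * y - a * y ^ 2))) y
      = ENNReal.ofReal ((Real.sqrt (2 * π))⁻¹ * exp (b * y - (a + 1/2) * y ^ 2)) := by
    intro y
    simp only [Pi.mul_apply, gaussianPDF, gaussianPDFReal]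
    rw [← ENNReal.ofReal_mul (by positivity)]
    congr 1
    push_cast
    rw [mul_assoc, ← Real.exp_add]
    congr 2
    · norm_num
    · ring
  simp_rw [hpdf]
  rw [← MeasureTheory.ofReal_integral_eq_lintegral_ofReal]
  · congr 1
    rw [MeasureTheory.integral_const_mul, integral_exp_linear_quadratic b _ ha']
    have h2π : (0:ℝ) < 2 * π := by positivity
    have hs : (Real.sqrt (2*π))⁻¹ * Real.sqrt (π / (a + 1/2)) = (Real.sqrt (2*a+1))⁻¹ := by
      rw [← Real.sqrt_inv, ← Real.sqrt_mul (by positivity)]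
      rw [← Real.sqrt_inv]
      congr 1
      have h2π : π ≠ 0 := pi_ne_zero
      have hd : π / (a + 1/2) = 2*π/(2*a+1) := by
        rw [div_eq_div_iff (ne_of_gt ha') (ne_of_gt ha)]; ring
      rw [hd, ← mul_div_assoc, inv_mul_cancel₀ (by positivity : (2:ℝ)*π ≠ 0), one_div]
    calc (Real.sqrt (2*π))⁻¹ * (Real.sqrt (π / (a + 1/2)) * exp (b^2 / (4 * (a + 1/2))))
        = ((Real.sqrt (2*π))⁻¹ * Real.sqrt (π / (a + 1/2))) * exp (b^2 / (4 * (a + 1/2))) := by ring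
      _ = (Real.sqrt (2*a+1))⁻¹ * exp (b^2 / (2 * (2*a+1))) := by
          rw [hs]; congr 2; ring
  · exact (integrable_exp_linear_quadratic b _ ha').const_mul _
  · exact MeasureTheory.ae_of_all _ fun y => by positivity



lemma lintegral_gauss_shift (α β s : ℝ) (hβ : -(1/2) < β) (hαβ : α < β + 1/2) :
    ∫⁻ y : ℝ, ENNReal.ofReal (exp (α * (s + y) ^ 2 - β * y ^ 2)) ∂(gaussianReal 0 1)
      = ENNReal.ofReal ((Real.sqrt (2 * (β + 1/2 - α)))⁻¹
          * exp (α * (β + 1/2) / (β + 1/2 - α) * s ^ 2)) := by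
  have hpos : 0 < β + 1/2 - α := by linarith
  have hkey : ∀ y : ℝ, exp (α * (s + y) ^ 2 - β * y ^ 2)
      = exp (α * s ^ 2) * exp ((2 * α * s) * y - (β - α) * y ^ 2) := by
    intro y; rw [← Real.exp_add]; congr 1; ring
  simp_rw [hkey, ENNReal.ofReal_mul (le_of_lt (exp_pos _))]
  rw [lintegral_const_mul _ (by fun_prop), lintegral_gauss_exp _ _ (by linarith)]
  rw [← ENNReal.ofReal_mul (le_of_lt (exp_pos _))]
  congr 1
  have h1 : 2 * (β - α) + 1 = 2 * (β + 1/2 - α) := by ring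
  rw [h1, ← mul_assoc, mul_comm (exp (α * s^2)), mul_assoc]
  congr 1
  rw [← Real.exp_add]
  congr 1
  set c : ℝ := β + 1/2 - α with hc0
  have hc : c ≠ 0 := ne_of_gt hpos
  field_simp
  rw [hc0]
  ring

lemma lintegral_pi_prod {m : ℕ} (g : Fin m → ℝ → ENNReal) (hg : ∀ k, Measurable (g k)) :
    ∫⁻ y : Fin m → ℝ, ∏ k, g k (y k) ∂(Measure.pi fun _ => gaussianReal 0 1)
      = ∏ k, ∫⁻ x : ℝ, g k x ∂(gaussianReal 0 1) := by
  induction m with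
  | zero => simp [Measure.pi_of_empty, lintegral_dirac]
  | succ m ih =>
      have hmp := measurePreserving_piFinSuccAbove (fun _ : Fin (m+1) => gaussianReal 0 1) 0
      set e := MeasurableEquiv.piFinSuccAbove (fun _ : Fin (m+1) => ℝ) 0
      have hfm : Measurable fun y : Fin (m+1) → ℝ => ∏ k, g k (y k) :=
        Finset.measurable_prod _ fun k _ => (hg k).comp (measurable_pi_apply k)
      have hmeas : Measurable (fun p : ℝ × (Fin m → ℝ) =>
          g 0 p.1 * ∏ k : Fin m, g k.succ (p.2 k)) :=
        ((hg 0).comp measurable_fst).mul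
          (Finset.measurable_prod _ fun k _ => (hg k.succ).comp
            ((measurable_pi_apply k).comp measurable_snd))
      have heq : ∀ y : Fin (m+1) → ℝ,
          ∏ k, g k (y k) = g 0 ((e y).1) * ∏ k : Fin m, g k.succ ((e y).2 k) := by
        intro y
        rw [Fin.prod_univ_succ]
        congr 1
      calc ∫⁻ y : Fin (m+1) → ℝ, ∏ k, g k (y k) ∂(Measure.pi fun _ => gaussianReal 0 1)
          = ∫⁻ y : Fin (m+1) → ℝ, g 0 ((e y).1) * ∏ k : Fin m, g k.succ ((e y).2 k)
              ∂(Measure.pi fun _ => gaussianReal 0 1) := by simp_rw [heq]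
        _ = ∫⁻ p : ℝ × (Fin m → ℝ), g 0 p.1 * ∏ k : Fin m, g k.succ (p.2 k)
              ∂((gaussianReal 0 1).prod (Measure.pi fun _ => gaussianReal 0 1)) :=
            hmp.lintegral_comp hmeas
        _ = (∫⁻ x : ℝ, g 0 x ∂(gaussianReal 0 1)) *
              ∫⁻ z : Fin m → ℝ, ∏ k : Fin m, g k.succ (z k)
                ∂(Measure.pi fun _ => gaussianReal 0 1) :=
            lintegral_prod_mul ((hg 0).aemeasurable)
              ((Finset.measurable_prod _ fun (k : Fin m) _ => (hg k.succ).comp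
                (measurable_pi_apply k)).aemeasurable)
        _ = ∏ k, ∫⁻ x : ℝ, g k x ∂(gaussianReal 0 1) := by
            rw [ih (fun k : Fin m => g k.succ) (fun k : Fin m => hg k.succ), Fin.prod_univ_succ]

set_option maxHeartbeats 1000000

set_option maxHeartbeats 1000000

lemma master (d : ℕ) : ∀ (n : ℕ) (α β : ℝ), -(1/2) < β → (n : ℝ) * α < β + 1/2 →
    ∀ s : Fin d → ℝ,
    ∫⁻ x : Fin n → Fin d → ℝ,
        ENNReal.ofReal (exp (∑ k, (α * (s k + ∑ i, x i k) ^ 2 - β * ∑ i, (x i k) ^ 2)))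
        ∂(Measure.pi fun _ : Fin n => Measure.pi fun _ : Fin d => gaussianReal 0 1)
      = ENNReal.ofReal
          ((Real.sqrt ((2 * (β + 1/2)) ^ n * ((β + 1/2) - n * α) / (β + 1/2)))⁻¹ ^ d
            * exp (α * (β + 1/2) / ((β + 1/2) - n * α) * ∑ k, (s k) ^ 2)) := by
  intro n
  induction n with
  | zero =>
      intro α β hβ _ s
      have hδ : (0:ℝ) < β + 1/2 := by linarith
      rw [Measure.pi_of_empty]
      rw [lintegral_dirac' _ (by fun_prop)]
      congr 1
      have h1 : ∀ k : Fin d, ∑ i : Fin 0, (fun a => isEmptyElim a : (i : Fin 0) → Fin d → ℝ) i k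
          = (0:ℝ) := by intro k; simp
      have h2 : ∀ k : Fin d, ∑ i : Fin 0, ((fun a => isEmptyElim a : (i : Fin 0) → Fin d → ℝ) i k) ^ 2
          = (0:ℝ) := by intro k; simp
      simp only [h1, h2, Nat.cast_zero, zero_mul, mul_zero, sub_zero, add_zero, pow_zero, one_mul]
      rw [div_self (ne_of_gt hδ), Real.sqrt_one, inv_one, one_pow, one_mul]
      rw [mul_div_assoc, div_self (ne_of_gt hδ), mul_one, Finset.mul_sum]
  | succ n ih =>
      intro α β hβ hn s
      have hδ : (0:ℝ) < β + 1/2 := by linarith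
      have hcast : ((n + 1 : ℕ) : ℝ) = (n : ℝ) + 1 := by push_cast; ring
      rw [hcast] at hn
      have hn' : (n : ℝ) * α < β + 1/2 := by
        rcases le_or_gt 0 α with h | h
        · nlinarith
        · nlinarith [Nat.cast_nonneg (α := ℝ) n]
      have hD : (0:ℝ) < β + 1/2 - n * α := by linarith
      have hD1 : (0:ℝ) < β + 1/2 - ((n:ℝ) + 1) * α := by linarith
      set αn : ℝ := α * (β + 1/2) / (β + 1/2 - n * α) with hαn_def
      have hαn_lt : αn < β + 1/2 := by
        rw [hαn_def, div_lt_iff₀ hD]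
        nlinarith [mul_pos hδ hD1]
      set Cn : ℝ := (Real.sqrt ((2 * (β + 1/2)) ^ n * ((β + 1/2) - n * α) / (β + 1/2)))⁻¹
        with hCn_def
      have hCn_nonneg : 0 ≤ Cn := by rw [hCn_def]; positivity
      have hmp := measurePreserving_piFinSuccAbove
        (fun _ : Fin (n+1) => (Measure.pi fun _ : Fin d => gaussianReal 0 1)) 0
      have hFmeas : Measurable (fun p : (Fin d → ℝ) × (Fin n → Fin d → ℝ) =>
          ENNReal.ofReal (exp (∑ k, (-β * (p.1 k) ^ 2 +
            (α * ((s k + p.1 k) + ∑ i, p.2 i k) ^ 2 - β * ∑ i, (p.2 i k) ^ 2))))) := by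
        fun_prop
      have hdecomp : β + 1/2 - αn = (β + 1/2) * (β + 1/2 - ((n:ℝ)+1) * α) / (β + 1/2 - n * α) := by
        rw [hαn_def, eq_div_iff hD.ne', sub_mul, div_mul_cancel₀ _ hD.ne']
        ring
      have key1 : αn * (β + 1/2) / (β + 1/2 - αn)
          = α * (β + 1/2) / ((β + 1/2) - ((n:ℝ)+1) * α) := by
        rw [hαn_def] at hdecomp ⊢
        rw [hdecomp, div_mul_eq_mul_div, div_div_div_cancel_right₀]
        · rw [div_eq_div_iff (mul_ne_zero hδ.ne' hD1.ne') hD1.ne']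
          ring
        · exact hD.ne'
      have key2 : Cn * (Real.sqrt (2 * (β + 1/2 - αn)))⁻¹
          = (Real.sqrt ((2 * (β + 1/2)) ^ (n+1) * ((β + 1/2) - ((n:ℝ)+1) * α) / (β + 1/2)))⁻¹ := by
        rw [hCn_def, ← mul_inv, ← Real.sqrt_mul (by positivity)]
        congr 2
        rw [hdecomp, ← mul_div_assoc, div_mul_div_comm,
          div_eq_div_iff (mul_ne_zero hδ.ne' hD.ne') hδ.ne']
        ring
      calc ∫⁻ x : Fin (n+1) → Fin d → ℝ,
            ENNReal.ofReal (exp (∑ k, (α * (s k + ∑ i, x i k) ^ 2 - β * ∑ i, (x i k) ^ 2)))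
            ∂(Measure.pi fun _ : Fin (n+1) => Measure.pi fun _ : Fin d => gaussianReal 0 1)
          = ∫⁻ x : Fin (n+1) → Fin d → ℝ,
            (fun p : (Fin d → ℝ) × (Fin n → Fin d → ℝ) =>
              ENNReal.ofReal (exp (∑ k, (-β * (p.1 k) ^ 2 +
                (α * ((s k + p.1 k) + ∑ i, p.2 i k) ^ 2 - β * ∑ i, (p.2 i k) ^ 2)))))
              ((MeasurableEquiv.piFinSuccAbove (fun _ : Fin (n+1) => (Fin d → ℝ)) 0) x)
            ∂(Measure.pi fun _ : Fin (n+1) => Measure.pi fun _ : Fin d => gaussianReal 0 1) := by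
            apply lintegral_congr
            intro x
            simp only
            congr 2
            apply Finset.sum_congr rfl
            intro k _
            have e2 : ∀ j : Fin n,
                ((MeasurableEquiv.piFinSuccAbove (fun _ : Fin (n+1) => (Fin d → ℝ)) 0) x).2 j
                  = x j.succ := by
              intro j
              show x ((0 : Fin (n+1)).succAbove j) = x j.succ
              rw [Fin.zero_succAbove]
            have e1 : ((MeasurableEquiv.piFinSuccAbove (fun _ : Fin (n+1) => (Fin d → ℝ)) 0) x).1
                = x 0 := rfl
            simp only [e1, e2]
            rw [Fin.sum_univ_succ (f := fun i => x i k),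
              Fin.sum_univ_succ (f := fun i => (x i k) ^ 2)]
            ring
        _ = ∫⁻ p : (Fin d → ℝ) × (Fin n → Fin d → ℝ),
              ENNReal.ofReal (exp (∑ k, (-β * (p.1 k) ^ 2 +
                (α * ((s k + p.1 k) + ∑ i, p.2 i k) ^ 2 - β * ∑ i, (p.2 i k) ^ 2))))
              ∂((Measure.pi fun _ : Fin d => gaussianReal 0 1).prod
                  (Measure.pi fun _ : Fin n => Measure.pi fun _ : Fin d => gaussianReal 0 1)) :=
            hmp.lintegral_comp hFmeas
        _ = ∫⁻ a : Fin d → ℝ, ∫⁻ z : Fin n → Fin d → ℝ,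
              ENNReal.ofReal (exp (∑ k, (-β * (a k) ^ 2 +
                (α * ((s k + a k) + ∑ i, z i k) ^ 2 - β * ∑ i, (z i k) ^ 2))))
              ∂(Measure.pi fun _ : Fin n => Measure.pi fun _ : Fin d => gaussianReal 0 1)
              ∂(Measure.pi fun _ : Fin d => gaussianReal 0 1) :=
            lintegral_prod _ hFmeas.aemeasurable
        _ = ∫⁻ a : Fin d → ℝ,
              ENNReal.ofReal (exp (∑ k, (-β * (a k) ^ 2)))
                * ENNReal.ofReal (Cn ^ d
                    * exp (αn * ∑ k, (s k + a k) ^ 2)) ∂(Measure.pi fun _ : Fin d => gaussianReal 0 1) := by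
            apply lintegral_congr
            intro a
            have hsplit : ∀ z : Fin n → Fin d → ℝ,
                ENNReal.ofReal (exp (∑ k, (-β * (a k) ^ 2 +
                  (α * ((s k + a k) + ∑ i, z i k) ^ 2 - β * ∑ i, (z i k) ^ 2))))
                = ENNReal.ofReal (exp (∑ k, (-β * (a k) ^ 2)))
                  * ENNReal.ofReal (exp (∑ k,
                      (α * ((s k + a k) + ∑ i, z i k) ^ 2 - β * ∑ i, (z i k) ^ 2))) := by
              intro z
              rw [← ENNReal.ofReal_mul (le_of_lt (exp_pos _)), ← Real.exp_add,
                ← Finset.sum_add_distrib]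
            simp_rw [hsplit]
            rw [lintegral_const_mul _ (by fun_prop)]
            congr 1
            rw [ih α β hβ hn' (fun k => s k + a k), ← hCn_def, ← hαn_def]
        _ = ENNReal.ofReal (Cn ^ d) *
              ∫⁻ a : Fin d → ℝ, ∏ k, ENNReal.ofReal (exp (αn * (s k + a k) ^ 2 - β * (a k) ^ 2))
                ∂(Measure.pi fun _ : Fin d => gaussianReal 0 1) := by
            rw [← lintegral_const_mul _ (by fun_prop)]
            apply lintegral_congr
            intro a
            rw [← ENNReal.ofReal_prod_of_nonneg (fun k _ => le_of_lt (exp_pos _)),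
              ← Real.exp_sum, ENNReal.ofReal_mul (by positivity), mul_left_comm]
            congr 1
            rw [← ENNReal.ofReal_mul (le_of_lt (exp_pos _)), ← Real.exp_add]
            congr 2
            rw [Finset.mul_sum, ← Finset.sum_add_distrib]
            apply Finset.sum_congr rfl
            intro k _
            ring
        _ = ENNReal.ofReal (Cn ^ d) *
              ∏ k, ENNReal.ofReal ((Real.sqrt (2 * (β + 1/2 - αn)))⁻¹
                * exp (αn * (β + 1/2) / (β + 1/2 - αn) * (s k) ^ 2)) := by
            rw [lintegral_pi_prod (fun k => fun y => ENNReal.ofReal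
                (exp (αn * (s k + y) ^ 2 - β * y ^ 2))) (fun k => by fun_prop)]
            congr 1
            apply Finset.prod_congr rfl
            intro k _
            exact lintegral_gauss_shift αn β (s k) hβ hαn_lt
        _ = ENNReal.ofReal
            ((Real.sqrt ((2 * (β + 1/2)) ^ (n+1) * ((β + 1/2) - ((n:ℝ)+1) * α) / (β + 1/2)))⁻¹ ^ d
              * exp (α * (β + 1/2) / ((β + 1/2) - ((n:ℝ)+1) * α) * ∑ k, (s k) ^ 2)) := by
            rw [← ENNReal.ofReal_prod_of_nonneg (fun k _ => by positivity),
              ← ENNReal.ofReal_mul (by positivity)]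
            congr 1
            rw [Finset.prod_mul_distrib, Finset.prod_const, Finset.card_univ, Fintype.card_fin,
              ← Real.exp_sum, ← Finset.mul_sum]
            rw [key1, ← key2, mul_pow]
            ring
      rw [hcast]



lemma exp_sub_sq_le {x : ℝ} (hx : |x| ≤ 1/4) : exp (x - x^2) ≤ 1 + x := by
  set u := x - x^2 with hu
  have hxx : x^2 = |x|^2 := (sq_abs x).symm
  have hA : |u| ≤ |x| + x^2 := by
    calc |u| ≤ |x| + |x^2| := abs_sub _ _
      _ = |x| + x^2 := by rw [abs_of_nonneg (sq_nonneg x)]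
  have hA' : |u| ≤ (5/4) * |x| := by nlinarith [abs_nonneg x, sq_abs x]
  have hA1 : |u| ≤ 1 := by nlinarith [abs_nonneg x]
  have hb := Real.exp_bound hA1 (by norm_num : 0 < 3)
  have hsum : ∑ m ∈ Finset.range 3, u ^ m / (m.factorial : ℝ) = 1 + u + u^2/2 := by
    simp [Finset.sum_range_succ]
  rw [hsum] at hb
  have hb2 : exp u ≤ 1 + u + u^2/2 + |u|^3 * (4/(6*3)) := by
    have := abs_le.mp hb
    push_cast at this
    have h1 := this.2
    have : ((3:ℕ).succ : ℝ) / ((3:ℕ).factorial * 3) = 4/(6*3) := by norm_num [Nat.factorial]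
    nlinarith [this, abs_le.mp hb]
  have husq : u^2 = |u|^2 := (sq_abs u).symm
  have h3 : |u|^3 = |u| * |u|^2 := by ring
  nlinarith [abs_nonneg u, abs_nonneg x, sq_abs x, sq_abs u, sq_nonneg (|x|),
    mul_le_mul_of_nonneg_left hA' (abs_nonneg u),
    pow_le_pow_left₀ (abs_nonneg u) hA' 2,
    pow_le_pow_left₀ (abs_nonneg u) hA' 3, abs_le.mp hx]

lemma Cn_le (n : ℕ) (hn : 2 ≤ n) (l : ℝ) (hl : |l| ≤ 1/(8*n)) :
    (Real.sqrt ((2 * (l + 1/2)) ^ n * ((l + 1/2) - n * l) / (l + 1/2)))⁻¹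
      ≤ exp (4 * n^2 * l^2) := by
  have hnr : (2:ℝ) ≤ (n:ℝ) := by exact_mod_cast hn
  have hnpos : (0:ℝ) < n := by linarith
  have hlabs : |l| ≤ 1/16 := by
    calc |l| ≤ 1/(8*n) := hl
      _ ≤ 1/16 := by
        apply div_le_div_of_nonneg_left (by norm_num) (by norm_num)
        linarith
  have hl1 := abs_le.mp hlabs
  have hnl : (n:ℝ) * |l| ≤ 1/8 := by
    rw [le_div_iff₀ (by positivity)] at hl
    linarith [hl]
  have h2l : |2*l| ≤ 1/4 := by rw [abs_mul]; rw [abs_two]; nlinarith [abs_nonneg l]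
  have hnl1 : |(-(2 * ((n:ℝ)-1) * l))| ≤ 1/4 := by
    rw [abs_neg, abs_mul, abs_mul, abs_two, abs_of_nonneg (by linarith : (0:ℝ) ≤ (n:ℝ)-1)]
    nlinarith [abs_nonneg l, mul_le_mul_of_nonneg_left (abs_nonneg l) (by linarith : (0:ℝ) ≤ (n:ℝ))]
  have h12l : (0:ℝ) < 1 + 2*l := by nlinarith [abs_le.mp h2l]
  have hδ : (0:ℝ) < l + 1/2 := by linarith
  -- rewrite the inside
  have hD : (0:ℝ) < (l + 1/2) - n * l := by
    have : (n:ℝ)*l ≤ n * |l| := by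
      apply mul_le_mul_of_nonneg_left (le_abs_self l) (le_of_lt hnpos)
    linarith
  have hins : (2 * (l + 1/2)) ^ n * ((l + 1/2) - n * l) / (l + 1/2)
      = (1 + 2*l) ^ n * (1 - 2*((n:ℝ)-1)*l) / (1 + 2*l) := by
    rw [show (2 * (l + 1/2)) = 1 + 2*l by ring, div_eq_div_iff hδ.ne' h12l.ne']
    ring
  rw [hins]
  -- lower bounds
  have key1 : exp (2*l - (2*l)^2) ≤ 1 + 2*l := by
    have := exp_sub_sq_le h2l
    linarith [this]
  have key1n : exp ((n:ℝ) * (2*l - (2*l)^2)) ≤ (1 + 2*l)^n := by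
    rw [exp_nat_mul]
    exact pow_le_pow_left₀ (le_of_lt (exp_pos _)) key1 n
  have key2 : exp (-(2*((n:ℝ)-1)*l) - (2*((n:ℝ)-1)*l)^2) ≤ 1 - 2*((n:ℝ)-1)*l := by
    have h := exp_sub_sq_le hnl1
    have : (-(2 * ((n:ℝ)-1) * l)) - (-(2 * ((n:ℝ)-1) * l))^2
        = -(2*((n:ℝ)-1)*l) - (2*((n:ℝ)-1)*l)^2 := by ring
    rw [this] at h
    linarith [h]
  have key3 : 1 + 2*l ≤ exp (2*l) := by linarith [add_one_le_exp (2*l)]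
  have hmain : exp (-(8 * n^2 * l^2))
      ≤ (1 + 2*l) ^ n * (1 - 2*((n:ℝ)-1)*l) / (1 + 2*l) := by
    have hnum : exp ((n:ℝ) * (2*l - (2*l)^2)) * exp (-(2*((n:ℝ)-1)*l) - (2*((n:ℝ)-1)*l)^2)
        ≤ (1 + 2*l)^n * (1 - 2*((n:ℝ)-1)*l) :=
      mul_le_mul key1n key2 (le_of_lt (exp_pos _)) (by positivity)
    have hdiv : exp ((n:ℝ) * (2*l - (2*l)^2)) * exp (-(2*((n:ℝ)-1)*l) - (2*((n:ℝ)-1)*l)^2)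
          / exp (2*l)
        ≤ (1 + 2*l)^n * (1 - 2*((n:ℝ)-1)*l) / (1 + 2*l) :=
      div_le_div₀ (mul_nonneg (pow_nonneg h12l.le n)
        (le_of_lt (lt_of_lt_of_le (exp_pos _) key2))) hnum h12l key3
    calc exp (-(8 * n^2 * l^2))
        ≤ exp ((n:ℝ) * (2*l - (2*l)^2) + (-(2*((n:ℝ)-1)*l) - (2*((n:ℝ)-1)*l)^2) - 2*l) := by
          apply exp_le_exp.mpr
          nlinarith [sq_nonneg ((n:ℝ) - 1), sq_nonneg l, sq_nonneg ((n:ℝ)*l), sq_nonneg (((n:ℝ)-1)*l), sq_nonneg (l*((n:ℝ)+1))]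
      _ = exp ((n:ℝ) * (2*l - (2*l)^2)) * exp (-(2*((n:ℝ)-1)*l) - (2*((n:ℝ)-1)*l)^2)
            / exp (2*l) := by rw [← exp_add, ← exp_sub]
      _ ≤ _ := hdiv
  -- conclude
  have hsqrt : exp (-(4 * (n:ℝ)^2 * l^2))
      ≤ Real.sqrt ((1 + 2*l) ^ n * (1 - 2*((n:ℝ)-1)*l) / (1 + 2*l)) := by
    rw [show (-(4 * (n:ℝ)^2 * l^2)) = (-(8 * (n:ℝ)^2 * l^2))/2 by ring, Real.exp_half]
    exact Real.sqrt_le_sqrt hmain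
  have hposE : (0:ℝ) < exp (-(4 * (n:ℝ)^2 * l^2)) := exp_pos _
  calc (Real.sqrt ((1 + 2*l) ^ n * (1 - 2*((n:ℝ)-1)*l) / (1 + 2*l)))⁻¹
      ≤ (exp (-(4 * (n:ℝ)^2 * l^2)))⁻¹ := inv_anti₀ hposE hsqrt
    _ = exp (4 * (n:ℝ)^2 * l^2) := by rw [exp_neg, inv_inv]

lemma sum_offDiag_mul {n : ℕ} (f : Fin n → ℝ) :
    ∑ ij ∈ Finset.univ.offDiag, f ij.1 * f ij.2 = (∑ i, f i)^2 - ∑ i, (f i)^2 := by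
  have h1 : (∑ i, f i)^2 = ∑ ij ∈ Finset.univ ×ˢ Finset.univ, f ij.1 * f ij.2 := by
    rw [sq, Finset.sum_mul_sum]
    rw [Finset.sum_product]
  have h2 : ∑ ij ∈ Finset.univ ×ˢ Finset.univ, f ij.1 * f ij.2
      = ∑ ij ∈ (Finset.univ : Finset (Fin n)).diag, f ij.1 * f ij.2
        + ∑ ij ∈ Finset.univ.offDiag, f ij.1 * f ij.2 := by
    rw [← Finset.sum_union (Finset.disjoint_diag_offDiag _), Finset.diag_union_offDiag]
  have h3 : ∑ ij ∈ (Finset.univ : Finset (Fin n)).diag, f ij.1 * f ij.2 = ∑ i, (f i)^2 := by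
    rw [Finset.sum_diag]
    exact Finset.sum_congr rfl fun i _ => (sq (f i)).symm
  rw [h1, h2, h3]
  ring

lemma inner_symm_eq (d : ℕ) (u v : Fin d → ℝ) :
    ⟪(MeasurableEquiv.toLp 2 (Fin d → ℝ)) u,
      (MeasurableEquiv.toLp 2 (Fin d → ℝ)) v⟫ = ∑ k, u k * v k := by
  rw [PiLp.inner_apply]
  apply Finset.sum_congr rfl
  intro k _
  simp [MeasurableEquiv.coe_toLp, RCLike.inner_apply, mul_comm]

lemma tail_bound {Ω : Type*} [MeasurableSpace Ω] (μ : Measure Ω) (f : Ω → ℝ)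
    (hf : Measurable f) (t lam M : ℝ) (hl : 0 < lam)
    (hM : ∫⁻ x, ENNReal.ofReal (exp (lam * f x)) ∂μ ≤ ENNReal.ofReal M) :
    μ {x | t ≤ f x} ≤ ENNReal.ofReal (exp (-(lam * t)) * M) := by
  have hsub : {x | t ≤ f x} ⊆ {x | ENNReal.ofReal (exp (lam * t))
      ≤ ENNReal.ofReal (exp (lam * f x))} := by
    intro x hx
    exact ENNReal.ofReal_le_ofReal (exp_le_exp.mpr (by
      exact mul_le_mul_of_nonneg_left hx hl.le))
  have h1 : ENNReal.ofReal (exp (lam * t)) * μ {x | t ≤ f x} ≤ ENNReal.ofReal M := by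
    refine le_trans ?_ hM
    refine le_trans ?_ (mul_meas_ge_le_lintegral₀ (by fun_prop) (ENNReal.ofReal (exp (lam * t))))
    exact mul_le_mul_right (measure_mono hsub) _
  have hne : ENNReal.ofReal (exp (lam * t)) ≠ 0 := by
    simp [ENNReal.ofReal_eq_zero, not_le, exp_pos]
  have hnetop : ENNReal.ofReal (exp (lam * t)) ≠ ⊤ := ENNReal.ofReal_ne_top
  calc μ {x | t ≤ f x}
      = (ENNReal.ofReal (exp (lam * t)))⁻¹ * (ENNReal.ofReal (exp (lam * t)) * μ {x | t ≤ f x}) := by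
        rw [← mul_assoc, ENNReal.inv_mul_cancel hne hnetop, one_mul]
    _ ≤ (ENNReal.ofReal (exp (lam * t)))⁻¹ * ENNReal.ofReal M := mul_le_mul_right h1 _
    _ = ENNReal.ofReal (exp (-(lam * t)) * M) := by
        rw [← ENNReal.ofReal_inv_of_pos (exp_pos _), ← exp_neg,
          ENNReal.ofReal_mul (le_of_lt (exp_pos _))]

lemma mgf_bound (n d : ℕ) (hn : 2 ≤ n) (l : ℝ) (hl : |l| ≤ 1/(8*(n:ℝ))) :
    ∫⁻ x : Fin n → Fin d → ℝ,
      ENNReal.ofReal (exp (l * ∑ ij ∈ Finset.univ.offDiag, ∑ k, x ij.1 k * x ij.2 k))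
      ∂(Measure.pi fun _ : Fin n => Measure.pi fun _ : Fin d => gaussianReal 0 1)
      ≤ ENNReal.ofReal (exp (4*(n:ℝ)^2*(d:ℝ)*l^2)) := by
  have hnr : (2:ℝ) ≤ (n:ℝ) := by exact_mod_cast hn
  have hnpos : (0:ℝ) < n := by linarith
  have habs : |l| ≤ 1/16 := le_trans hl (by
    rw [div_le_div_iff₀ (by positivity) (by norm_num)]
    linarith)
  have hl1 := abs_le.mp habs
  have hβ : -(1/2) < l := by linarith
  have hnl : (n:ℝ) * |l| ≤ 1/8 := by
    rw [le_div_iff₀ (by positivity)] at hl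
    linarith
  have hcond : (n:ℝ) * l < l + 1/2 := by
    have h1 : (n:ℝ) * l - l ≤ (n:ℝ)*|l| + |l| := by
      have := le_abs_self l
      have := neg_abs_le l
      nlinarith
    linarith
  have hrw : ∀ x : Fin n → Fin d → ℝ,
      l * ∑ ij ∈ Finset.univ.offDiag, ∑ k, x ij.1 k * x ij.2 k
        = ∑ k, (l * (((fun _ : Fin d => (0:ℝ)) k) + ∑ i, x i k) ^ 2 - l * ∑ i, (x i k) ^ 2) := by
    intro x
    rw [Finset.sum_comm, Finset.mul_sum]
    apply Finset.sum_congr rfl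
    intro k _
    rw [sum_offDiag_mul (fun i => x i k)]
    simp only [zero_add]
    ring
  simp_rw [hrw]
  rw [master d n l l hβ hcond (fun _ => 0)]
  apply ENNReal.ofReal_le_ofReal
  have hz : ∑ k : Fin d, ((fun _ : Fin d => (0:ℝ)) k)^2 = 0 := by simp
  rw [hz, mul_zero, Real.exp_zero, mul_one]
  calc (Real.sqrt ((2 * (l + 1/2)) ^ n * ((l + 1/2) - n * l) / (l + 1/2)))⁻¹ ^ d
      ≤ (exp (4 * (n:ℝ)^2 * l^2)) ^ d := by
        apply pow_le_pow_left₀ (by positivity) (Cn_le n hn l hl) d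
    _ = exp ((d:ℝ) * (4 * (n:ℝ)^2 * l^2)) := by rw [← Real.exp_nat_mul]
    _ = exp (4*(n:ℝ)^2*(d:ℝ)*l^2) := by ring_nf

lemma exponent_le (n d t : ℝ) (hn : 2 ≤ n) (hd : 2 ≤ d) (ht : 0 < t) :
    -(min (t/(8*n^2*d)) (1/(8*n)) * t) + 4*n^2*d*(min (t/(8*n^2*d)) (1/(8*n)))^2
      ≤ -(1/16) * min (t^2/(n^2*d)) (t/n) := by
  have hnpos : (0:ℝ) < n := by linarith
  have hdpos : (0:ℝ) < d := by linarith
  rcases le_total (t/(8*n^2*d)) (1/(8*n)) with h | h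
  · rw [min_eq_left h]
    have heq : -((t/(8*n^2*d)) * t) + 4*n^2*d*(t/(8*n^2*d))^2 = -(1/16) * (t^2/(n^2*d)) := by
      field_simp
      ring
    rw [heq]
    have hmin : min (t^2/(n^2*d)) (t/n) ≤ t^2/(n^2*d) := min_le_left _ _
    linarith
  · rw [min_eq_right h]
    have hnd : n*d ≤ t := by
      rw [div_le_div_iff₀ (by positivity) (by positivity)] at h
      nlinarith
    have e1 : -((1/(8*n))*t) + 4*n^2*d*(1/(8*n))^2 = (n*d - 2*t)/(16*n) := by
      field_simp
      ring
    have e2 : -(1/16) * (t/n) = (-t)/(16*n) := by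
      field_simp
    rw [e1]
    have hmin : min (t^2/(n^2*d)) (t/n) ≤ t/n := min_le_right _ _
    have h4 : -(1/16) * (t/n) ≤ -(1/16) * min (t^2/(n^2*d)) (t/n) := by linarith
    refine le_trans ?_ h4
    rw [e2, div_le_div_iff₀ (by positivity) (by positivity)]
    nlinarith

end AuxSConc

theorem S_concentration :
    ∃ c₂ : ℝ, 0 < c₂ ∧ ∀ n d : ℕ, 2 ≤ n → 2 ≤ d → ∀ t : ℝ, 0 < t →
      (Measure.pi fun _ : Fin n => stdGaussian d)
          {X | t ≤ |∑ ij ∈ Finset.univ.offDiag, ⟪X ij.1, X ij.2⟫|} ≤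
        ENNReal.ofReal (2 * Real.exp (-c₂ *
          min (t ^ 2 / ((n : ℝ) ^ 2 * (d : ℝ))) (t / (n : ℝ)))) := by
  refine ⟨1/16, by norm_num, ?_⟩
  intro n d hn hd t ht
  have hnr : (2:ℝ) ≤ (n:ℝ) := by exact_mod_cast hn
  have hdr : (2:ℝ) ≤ (d:ℝ) := by exact_mod_cast hd
  have hnpos : (0:ℝ) < n := by linarith
  have hdpos : (0:ℝ) < d := by linarith
  set lam := min (t/(8*(n:ℝ)^2*(d:ℝ))) (1/(8*(n:ℝ))) with hlam_def
  have hlampos : 0 < lam := lt_min (by positivity) (by positivity)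
  have hlamabs : |lam| ≤ 1/(8*(n:ℝ)) := by
    rw [abs_of_pos hlampos]; exact min_le_right _ _
  have hlamabs' : |(-lam)| ≤ 1/(8*(n:ℝ)) := by rw [abs_neg]; exact hlamabs
  -- measure transfer
  have hT : MeasurePreserving
      (fun (x : Fin n → Fin d → ℝ) (i : Fin n) =>
        (MeasurableEquiv.toLp 2 (Fin d → ℝ)) (x i))
      (Measure.pi fun _ : Fin n => Measure.pi fun _ : Fin d => gaussianReal 0 1)
      (Measure.pi fun _ : Fin n => stdGaussian d) :=
    measurePreserving_pi _ _
      (fun _ => ⟨(MeasurableEquiv.toLp 2 (Fin d → ℝ)).measurable, rfl⟩)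
  have hFmeas : Measurable fun X : Fin n → EuclideanSpace ℝ (Fin d) =>
      ∑ ij ∈ Finset.univ.offDiag, ⟪X ij.1, X ij.2⟫ := by
    apply Finset.measurable_sum
    intro ij _
    exact Measurable.inner (measurable_pi_apply _) (measurable_pi_apply _)
  have hAmeas : MeasurableSet {X : Fin n → EuclideanSpace ℝ (Fin d) |
      t ≤ |∑ ij ∈ Finset.univ.offDiag, ⟪X ij.1, X ij.2⟫|} :=
    measurableSet_le measurable_const hFmeas.abs
  rw [← hT.map_eq, Measure.map_apply hT.measurable hAmeas]
  have hpre : (fun (x : Fin n → Fin d → ℝ) (i : Fin n) =>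
        (MeasurableEquiv.toLp 2 (Fin d → ℝ)) (x i)) ⁻¹'
        {X | t ≤ |∑ ij ∈ Finset.univ.offDiag, ⟪X ij.1, X ij.2⟫|}
      = {x : Fin n → Fin d → ℝ |
          t ≤ |∑ ij ∈ Finset.univ.offDiag, ∑ k, x ij.1 k * x ij.2 k|} := by
    ext x
    simp only [Set.mem_preimage, Set.mem_setOf_eq]
    rw [show ∑ ij ∈ Finset.univ.offDiag,
        ⟪(MeasurableEquiv.toLp 2 (Fin d → ℝ)) (x ij.1),
          (MeasurableEquiv.toLp 2 (Fin d → ℝ)) (x ij.2)⟫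
        = ∑ ij ∈ Finset.univ.offDiag, ∑ k, x ij.1 k * x ij.2 k from
      Finset.sum_congr rfl fun ij _ => inner_symm_eq d _ _]
  rw [hpre]
  have hSmeas : Measurable fun x : Fin n → Fin d → ℝ =>
      ∑ ij ∈ Finset.univ.offDiag, ∑ k, x ij.1 k * x ij.2 k := by fun_prop
  -- two tails
  have htail1 : (Measure.pi fun _ : Fin n => Measure.pi fun _ : Fin d => gaussianReal 0 1)
      {x | t ≤ ∑ ij ∈ Finset.univ.offDiag, ∑ k, x ij.1 k * x ij.2 k}
      ≤ ENNReal.ofReal (exp (-(lam * t)) * exp (4*(n:ℝ)^2*(d:ℝ)*lam^2)) :=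
    tail_bound _ _ hSmeas t lam _ hlampos (mgf_bound n d hn lam hlamabs)
  have htail2 : (Measure.pi fun _ : Fin n => Measure.pi fun _ : Fin d => gaussianReal 0 1)
      {x | t ≤ -∑ ij ∈ Finset.univ.offDiag, ∑ k, x ij.1 k * x ij.2 k}
      ≤ ENNReal.ofReal (exp (-(lam * t)) * exp (4*(n:ℝ)^2*(d:ℝ)*lam^2)) := by
    apply tail_bound _ _ hSmeas.neg t lam _ hlampos
    have hrw : ∀ x : Fin n → Fin d → ℝ,
        lam * -(∑ ij ∈ Finset.univ.offDiag, ∑ k, x ij.1 k * x ij.2 k)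
          = (-lam) * ∑ ij ∈ Finset.univ.offDiag, ∑ k, x ij.1 k * x ij.2 k := fun x => by ring
    simp only [Pi.neg_apply, hrw]
    have := mgf_bound n d hn (-lam) hlamabs'
    rwa [show 4*(n:ℝ)^2*(d:ℝ)*(-lam)^2 = 4*(n:ℝ)^2*(d:ℝ)*lam^2 by ring] at this
  have hsub : {x : Fin n → Fin d → ℝ |
        t ≤ |∑ ij ∈ Finset.univ.offDiag, ∑ k, x ij.1 k * x ij.2 k|}
      ⊆ {x | t ≤ ∑ ij ∈ Finset.univ.offDiag, ∑ k, x ij.1 k * x ij.2 k}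
        ∪ {x | t ≤ -∑ ij ∈ Finset.univ.offDiag, ∑ k, x ij.1 k * x ij.2 k} := by
    intro x hx
    simp only [Set.mem_setOf_eq] at hx
    rcases abs_cases (∑ ij ∈ Finset.univ.offDiag, ∑ k, x ij.1 k * x ij.2 k) with ⟨h1, _⟩ | ⟨h1, _⟩
    · left; rw [h1] at hx; exact hx
    · right; rw [h1] at hx; exact hx
  have hexp := exponent_le (n:ℝ) (d:ℝ) t hnr hdr ht
  calc (Measure.pi fun _ : Fin n => Measure.pi fun _ : Fin d => gaussianReal 0 1)
        {x | t ≤ |∑ ij ∈ Finset.univ.offDiag, ∑ k, x ij.1 k * x ij.2 k|}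
      ≤ (Measure.pi fun _ : Fin n => Measure.pi fun _ : Fin d => gaussianReal 0 1)
        ({x | t ≤ ∑ ij ∈ Finset.univ.offDiag, ∑ k, x ij.1 k * x ij.2 k}
          ∪ {x | t ≤ -∑ ij ∈ Finset.univ.offDiag, ∑ k, x ij.1 k * x ij.2 k}) :=
        measure_mono hsub
    _ ≤ (Measure.pi fun _ : Fin n => Measure.pi fun _ : Fin d => gaussianReal 0 1)
        {x | t ≤ ∑ ij ∈ Finset.univ.offDiag, ∑ k, x ij.1 k * x ij.2 k}
        + (Measure.pi fun _ : Fin n => Measure.pi fun _ : Fin d => gaussianReal 0 1)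
        {x | t ≤ -∑ ij ∈ Finset.univ.offDiag, ∑ k, x ij.1 k * x ij.2 k} := measure_union_le _ _
    _ ≤ ENNReal.ofReal (exp (-(lam * t)) * exp (4*(n:ℝ)^2*(d:ℝ)*lam^2))
        + ENNReal.ofReal (exp (-(lam * t)) * exp (4*(n:ℝ)^2*(d:ℝ)*lam^2)) :=
        add_le_add htail1 htail2
    _ = ENNReal.ofReal (2 * exp (-(lam * t) + 4*(n:ℝ)^2*(d:ℝ)*lam^2)) := by
        rw [← Real.exp_add, ← ENNReal.ofReal_add (le_of_lt (exp_pos _)) (le_of_lt (exp_pos _))]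
        ring_nf
    _ ≤ ENNReal.ofReal (2 * Real.exp (-(1/16) *
          min (t ^ 2 / ((n : ℝ) ^ 2 * (d : ℝ))) (t / (n : ℝ)))) := by
        apply ENNReal.ofReal_le_ofReal
        apply mul_le_mul_of_nonneg_left _ (by norm_num)
        exact exp_le_exp.mpr hexp


end
end
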